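/- arXiv:2204.07245 — 4 statements merged into one kernel-verified Lean document; each statement's English description precedes it below -/
import Mathlib

section
/- Let 2 ≥ α₁ ≥ α₂ > 1. For i = 1, 2 let q_i ≥ 0 and ν_i a Borel measure on (0, +∞) with ∫₀^∞ (v² ∧ v) ν_i(dv) < +∞, set J_i(b) = (1/2)q_i b² + ∫₀^∞ (e^{−bv} − 1 + bv) ν_i(dv), and assume J_i is not identically zero and varies regularly at 0 with index α_i, and that either q_i > 0 or ∫₀^1 v ν_i(dv) = +∞ (infinite variation). Let G₁, G₂ : [0, +∞) → [0, +∞) be continuous with G₁(x) > 0, G₂(x) > 0 for x > 0 and with G₂/G₁ continuously differentiable on (0, +∞), and let η₁ > 0. Then the identity J₁(b·G₁(x)) + J₂(b·G₂(x)) = η₁·x·b^{α₁} holds for all b, x ≥ 0 if and only if one of the following holds: (a) there exist constants c₀, g₁, g₂ > 0 such that G₁(x) = c₀·g₁·x^{1/α₁} and G₂(x) = c₀·g₂·x^{1/α₁} for all x ≥ 0, and J₁(g₁·b) + J₂(g₂·b) = (η₁/c₀^{α₁})·b^{α₁} for all b ≥ 0; (b) there exist constants c₁, c₂ > 0 such that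 J₁(b) = c₁·b^{α₁} and J₂(b) = c₂·b^{α₁} for all b ≥ 0, and c₁·G₁(x)^{α₁} + c₂·G₂(x)^{α₁} = η₁·x for all x ≥ 0. -/
open Real Filter Set MeasureTheory

private lemma aux_J_nonneg {q : ℝ} (hq : 0 ≤ q) (ν : Measure ℝ) {J : ℝ → ℝ}
    (hJ : ∀ b ≥ (0:ℝ), J b = (1/2) * q * b ^ 2
        + ∫ v in Set.Ioi (0:ℝ), (Real.exp (-(b * v)) - 1 + b * v) ∂ν)
    {b : ℝ} (hb : 0 ≤ b) : 0 ≤ J b := by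
  rw [hJ b hb]
  have h1 : 0 ≤ (1/2) * q * b ^ 2 := by positivity
  have h2 : 0 ≤ ∫ v in Set.Ioi (0:ℝ), (Real.exp (-(b * v)) - 1 + b * v) ∂ν := by
    refine integral_nonneg fun v => ?_
    show (0:ℝ) ≤ Real.exp (-(b * v)) - 1 + b * v
    have := Real.add_one_le_exp (-(b * v))
    linarith
  linarith

private lemma aux_J_zero {q : ℝ} (ν : Measure ℝ) {J : ℝ → ℝ}
    (hJ : ∀ b ≥ (0:ℝ), J b = (1/2) * q * b ^ 2
        + ∫ v in Set.Ioi (0:ℝ), (Real.exp (-(b * v)) - 1 + b * v) ∂ν) :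
    J 0 = 0 := by
  rw [hJ 0 le_rfl]
  simp

private lemma aux_stable {J : ℝ → ℝ} {α β L E : ℝ} (hα : 0 < α) (hβ : 0 < β) (hL : 1 < L)
    (hreg : ∀ b > (0:ℝ), Tendsto (fun x => J (b * x) / J x)
      (nhdsWithin 0 (Set.Ioi 0)) (nhds (b ^ β)))
    (hfe : ∀ t ≥ (0:ℝ), J (L * t) - J t = E * t ^ α) :
    ∀ t > (0:ℝ), J t = (E / (L ^ α - 1)) * t ^ α := by
  have hL0 : (0:ℝ) < L := lt_trans one_pos hL
  have hLα : 1 < L ^ α := (Real.one_lt_rpow_iff_of_pos hL0).2 (Or.inl ⟨hL, hα⟩)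
  set c := E / (L ^ α - 1) with hc
  have hcE : c * (L ^ α - 1) = E := div_mul_cancel₀ E (by linarith)
  have hper : ∀ t ≥ (0:ℝ), J (L * t) - c * (L * t) ^ α = J t - c * t ^ α := by
    intro t ht
    have h1 : (L * t) ^ α = L ^ α * t ^ α := Real.mul_rpow hL0.le ht
    have h2 := hfe t ht
    rw [h1]
    linear_combination h2 - t ^ α * hcE
  intro t₀ ht₀
  by_contra hne
  have hne0 : J t₀ - c * t₀ ^ α ≠ 0 := sub_ne_zero_of_ne hne
  set h0 := J t₀ - c * t₀ ^ α with hh0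
  set x : ℕ → ℝ := fun n => t₀ * L⁻¹ ^ n with hxdef
  have hxpos : ∀ n, 0 < x n := fun n => mul_pos ht₀ (pow_pos (inv_pos.2 hL0) n)
  have hx0 : Tendsto x atTop (nhds 0) := by
    rw [hxdef]
    have h := tendsto_pow_atTop_nhds_zero_of_lt_one (inv_nonneg.2 hL0.le) (inv_lt_one_of_one_lt₀ hL)
    simpa using h.const_mul t₀
  have hrel : ∀ n, L * x (n + 1) = x n := by
    intro n
    simp only [hxdef]
    calc L * (t₀ * (L⁻¹ ^ n * L⁻¹)) = (L * L⁻¹) * (t₀ * L⁻¹ ^ n) := by ring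
      _ = t₀ * L⁻¹ ^ n := by rw [mul_inv_cancel₀ (ne_of_gt hL0), one_mul]
  have hinv : ∀ n, J (x n) - c * (x n) ^ α = h0 := by
    intro n
    induction n with
    | zero => simp [hxdef, hh0]
    | succ n ih =>
      have hp := hper (x (n + 1)) (hxpos (n + 1)).le
      rw [hrel n] at hp
      rw [← hp]
      exact ih
  have hxα : Tendsto (fun n => (x n) ^ α) atTop (nhds 0) := by
    have hc' : ContinuousAt (fun y : ℝ => y ^ α) 0 :=
      Real.continuousAt_rpow_const 0 α (Or.inr hα.le)
    have := hc'.tendsto.comp hx0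
    simpa [Function.comp_def, Real.zero_rpow (ne_of_gt hα)] using this
  have heqn : ∀ n, J (L * x n) = c * (L ^ α * (x n) ^ α) + h0 := by
    intro n
    have h1 := hper (x n) (hxpos n).le
    rw [Real.mul_rpow hL0.le (hxpos n).le] at h1
    linear_combination h1 + hinv n
  have heqd : ∀ n, J (x n) = c * (x n) ^ α + h0 := by
    intro n
    linear_combination hinv n
  have hnum : Tendsto (fun n => J (L * x n)) atTop (nhds h0) := by
    have h := (((hxα.const_mul (L ^ α)).const_mul c).add (tendsto_const_nhds (x := h0)))
    rw [funext heqn]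
    simpa using h
  have hden : Tendsto (fun n => J (x n)) atTop (nhds h0) := by
    have h := ((hxα.const_mul c).add (tendsto_const_nhds (x := h0)))
    rw [funext heqd]
    simpa using h
  have hdiv := hnum.div hden hne0
  rw [div_self hne0] at hdiv
  have hseq : Tendsto x atTop (nhdsWithin 0 (Set.Ioi 0)) :=
    tendsto_nhdsWithin_of_tendsto_nhds_of_eventually_within x hx0
      (Eventually.of_forall hxpos)
  have hcomp : Tendsto (fun n => J (L * x n) / J (x n)) atTop (nhds (L ^ β)) :=
    (hreg L hL0).comp hseq
  have h1β : (1:ℝ) = L ^ β := tendsto_nhds_unique hdiv hcomp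
  have hb1 : 1 < L ^ β := (Real.one_lt_rpow_iff_of_pos hL0).2 (Or.inl ⟨hL, hβ⟩)
  linarith

/-- Generating equations on a plane, case `J_μ̃(b) = η₁ b^{α₁}`: under the stated
assumptions on the Laplace exponents `J₁, J₂` (regularly varying at 0 with indices
`α₁ ≥ α₂` in `(1,2]`, infinite variation) and on `G₁, G₂`, the identity
`J₁(bG₁(x)) + J₂(bG₂(x)) = η₁·x·b^{α₁}` holds for all `b, x ≥ 0` iff either
(a) `G = c₀·x^{1/α₁}·(g₁, g₂)` and `g₁Z₁ + g₂Z₂` has `α₁`-stable exponent, or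
(b) `J₁, J₂` are `α₁`-stable exponents and `c₁G₁^{α₁} + c₂G₂^{α₁} = η₁x`. -/
theorem stmt12 (α₁ α₂ : ℝ) (hα₂ : 1 < α₂) (hα₁₂ : α₂ ≤ α₁) (hα₁ : α₁ ≤ 2)
    (q₁ q₂ : ℝ) (hq₁ : 0 ≤ q₁) (hq₂ : 0 ≤ q₂)
    (ν₁ ν₂ : Measure ℝ)
    (hν₁ : ∫⁻ v in Set.Ioi (0:ℝ), ENNReal.ofReal (min (v ^ 2) v) ∂ν₁ < ⊤)
    (hν₂ : ∫⁻ v in Set.Ioi (0:ℝ), ENNReal.ofReal (min (v ^ 2) v) ∂ν₂ < ⊤)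
    (J₁ J₂ : ℝ → ℝ)
    (hJ₁ : ∀ b ≥ (0:ℝ), J₁ b = (1/2) * q₁ * b ^ 2
        + ∫ v in Set.Ioi (0:ℝ), (Real.exp (-(b * v)) - 1 + b * v) ∂ν₁)
    (hJ₂ : ∀ b ≥ (0:ℝ), J₂ b = (1/2) * q₂ * b ^ 2
        + ∫ v in Set.Ioi (0:ℝ), (Real.exp (-(b * v)) - 1 + b * v) ∂ν₂)
    (hJ₁ne : ∃ b ≥ (0:ℝ), J₁ b ≠ 0) (hJ₂ne : ∃ b ≥ (0:ℝ), J₂ b ≠ 0)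
    (hreg₁ : ∀ b > (0:ℝ), Tendsto (fun x => J₁ (b * x) / J₁ x)
      (nhdsWithin 0 (Set.Ioi 0)) (nhds (b ^ α₁)))
    (hreg₂ : ∀ b > (0:ℝ), Tendsto (fun x => J₂ (b * x) / J₂ x)
      (nhdsWithin 0 (Set.Ioi 0)) (nhds (b ^ α₂)))
    (hiv₁ : 0 < q₁ ∨ ∫⁻ v in Set.Ioc (0:ℝ) 1, ENNReal.ofReal v ∂ν₁ = ⊤)
    (hiv₂ : 0 < q₂ ∨ ∫⁻ v in Set.Ioc (0:ℝ) 1, ENNReal.ofReal v ∂ν₂ = ⊤)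
    (G₁ G₂ : ℝ → ℝ)
    (hG₁c : ContinuousOn G₁ (Set.Ici 0)) (hG₂c : ContinuousOn G₂ (Set.Ici 0))
    (hG₁nn : ∀ x ≥ (0:ℝ), 0 ≤ G₁ x) (hG₂nn : ∀ x ≥ (0:ℝ), 0 ≤ G₂ x)
    (hG₁pos : ∀ x > (0:ℝ), 0 < G₁ x) (hG₂pos : ∀ x > (0:ℝ), 0 < G₂ x)
    (hratio : ContDiffOn ℝ 1 (fun x => G₂ x / G₁ x) (Set.Ioi 0))
    (η₁ : ℝ) (hη₁ : 0 < η₁) :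
    (∀ b ≥ (0:ℝ), ∀ x ≥ (0:ℝ),
        J₁ (b * G₁ x) + J₂ (b * G₂ x) = η₁ * x * b ^ α₁) ↔
      ((∃ c₀ > (0:ℝ), ∃ g₁ > (0:ℝ), ∃ g₂ > (0:ℝ),
          (∀ x ≥ (0:ℝ), G₁ x = c₀ * g₁ * x ^ (1 / α₁) ∧ G₂ x = c₀ * g₂ * x ^ (1 / α₁)) ∧
          (∀ b ≥ (0:ℝ), J₁ (g₁ * b) + J₂ (g₂ * b) = (η₁ / c₀ ^ α₁) * b ^ α₁)) ∨
       (∃ c₁ > (0:ℝ), ∃ c₂ > (0:ℝ),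
          (∀ b ≥ (0:ℝ), J₁ b = c₁ * b ^ α₁ ∧ J₂ b = c₂ * b ^ α₁) ∧
          (∀ x ≥ (0:ℝ), c₁ * G₁ x ^ α₁ + c₂ * G₂ x ^ α₁ = η₁ * x))) := by
  have hα₁pos : (0:ℝ) < α₁ := by linarith
  have hα₁ne : α₁ ≠ 0 := ne_of_gt hα₁pos
  have hα₂pos : (0:ℝ) < α₂ := by linarith
  have hJ₁nn : ∀ b ≥ (0:ℝ), 0 ≤ J₁ b := fun b hb => aux_J_nonneg hq₁ ν₁ hJ₁ hb
  have hJ₂nn : ∀ b ≥ (0:ℝ), 0 ≤ J₂ b := fun b hb => aux_J_nonneg hq₂ ν₂ hJ₂ hb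
  have hJ₁0 : J₁ 0 = 0 := aux_J_zero ν₁ hJ₁
  have hJ₂0 : J₂ 0 = 0 := aux_J_zero ν₂ hJ₂
  constructor
  · intro hmain
    -- key identity
    have key : ∀ x > (0:ℝ), ∀ s ≥ (0:ℝ),
        J₁ s + J₂ (G₂ x / G₁ x * s) = (η₁ * x / G₁ x ^ α₁) * s ^ α₁ := by
      intro x hx s hs
      have hG1 := hG₁pos x hx
      have H := hmain (s / G₁ x) (div_nonneg hs hG1.le) x hx.le
      rw [div_mul_cancel₀ s (ne_of_gt hG1)] at H
      have harg : s / G₁ x * G₂ x = G₂ x / G₁ x * s := by ring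
      rw [harg, Real.div_rpow hs hG1.le] at H
      rw [H]; ring
    -- G vanishes at 0
    have hG₁0 : G₁ 0 = 0 := by
      by_contra h
      have hpos : 0 < G₁ 0 := lt_of_le_of_ne (hG₁nn 0 le_rfl) (Ne.symm h)
      obtain ⟨b, hb, hbne⟩ := hJ₁ne
      apply hbne
      have H := hmain (b / G₁ 0) (div_nonneg hb hpos.le) 0 le_rfl
      rw [div_mul_cancel₀ b (ne_of_gt hpos)] at H
      simp only [mul_zero, zero_mul] at H
      have h2 := hJ₂nn (b / G₁ 0 * G₂ 0)
        (mul_nonneg (div_nonneg hb hpos.le) (hG₂nn 0 le_rfl))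
      have h1 := hJ₁nn b hb
      linarith
    have hG₂0 : G₂ 0 = 0 := by
      by_contra h
      have hpos : 0 < G₂ 0 := lt_of_le_of_ne (hG₂nn 0 le_rfl) (Ne.symm h)
      obtain ⟨b, hb, hbne⟩ := hJ₂ne
      apply hbne
      have H := hmain (b / G₂ 0) (div_nonneg hb hpos.le) 0 le_rfl
      rw [div_mul_cancel₀ b (ne_of_gt hpos)] at H
      simp only [mul_zero, zero_mul] at H
      have h2 := hJ₁nn (b / G₂ 0 * G₁ 0)
        (mul_nonneg (div_nonneg hb hpos.le) (hG₁nn 0 le_rfl))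
      have h1 := hJ₂nn b hb
      linarith
    by_cases hconst : ∀ x > (0:ℝ), G₂ x / G₁ x = G₂ 1 / G₁ 1
    · -- case (a)
      left
      have hG11 := hG₁pos 1 one_pos
      have hG21 := hG₂pos 1 one_pos
      have hr₀pos : 0 < G₂ 1 / G₁ 1 := div_pos hG21 hG11
      have hKx : ∀ x > (0:ℝ), η₁ * x / G₁ x ^ α₁ = J₁ 1 + J₂ (G₂ 1 / G₁ 1) := by
        intro x hx
        have H := key x hx 1 zero_le_one
        rw [hconst x hx, mul_one, Real.one_rpow, mul_one] at H
        exact H.symm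
      set K₀ := J₁ 1 + J₂ (G₂ 1 / G₁ 1) with hK₀
      have hK₀pos : 0 < K₀ := by
        rw [← hKx 1 one_pos]
        exact div_pos (by nlinarith) (Real.rpow_pos_of_pos hG11 α₁)
      set c₀ := (η₁ / K₀) ^ (1/α₁) with hc₀def
      have hc₀pos : 0 < c₀ := Real.rpow_pos_of_pos (div_pos hη₁ hK₀pos) _
      have hc₀α : c₀ ^ α₁ = η₁ / K₀ := by
        rw [hc₀def, ← Real.rpow_mul (div_pos hη₁ hK₀pos).le,
          one_div_mul_cancel hα₁ne, Real.rpow_one]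
      have hG₁x : ∀ x ≥ (0:ℝ), G₁ x = c₀ * x ^ (1/α₁) := by
        intro x hx
        rcases eq_or_lt_of_le hx with h0 | hx
        · rw [← h0, hG₁0, Real.zero_rpow (one_div_ne_zero hα₁ne), mul_zero]
        · have hK := hKx x hx
          have hGp := hG₁pos x hx
          have hgne : G₁ x ^ α₁ ≠ 0 := ne_of_gt (Real.rpow_pos_of_pos hGp α₁)
          have h1 : η₁ * x = K₀ * G₁ x ^ α₁ := by
            rw [← hK]; field_simp
          have hGα : G₁ x ^ α₁ = η₁ * x / K₀ := by
            rw [h1, mul_div_cancel_left₀ _ (ne_of_gt hK₀pos)]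
          have h2 : (G₁ x ^ α₁) ^ (1/α₁) = G₁ x := by
            rw [← Real.rpow_mul hGp.le, mul_one_div, div_self hα₁ne, Real.rpow_one]
          rw [← h2, hGα, show η₁ * x / K₀ = (η₁ / K₀) * x by ring,
            Real.mul_rpow (div_pos hη₁ hK₀pos).le hx.le]
      have hG₂x : ∀ x ≥ (0:ℝ), G₂ x = c₀ * (G₂ 1 / G₁ 1) * x ^ (1/α₁) := by
        intro x hx
        rcases eq_or_lt_of_le hx with h0 | hx
        · rw [← h0, hG₂0, Real.zero_rpow (one_div_ne_zero hα₁ne), mul_zero]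
        · have hGp := hG₁pos x hx
          have h1 : G₂ x = (G₂ 1 / G₁ 1) * G₁ x := by
            rw [← hconst x hx, div_mul_cancel₀ _ (ne_of_gt hGp)]
          rw [h1, hG₁x x hx.le]; ring
      refine ⟨c₀, hc₀pos, 1, one_pos, G₂ 1 / G₁ 1, hr₀pos, fun x hx => ⟨?_, ?_⟩, ?_⟩
      · rw [hG₁x x hx]; ring
      · exact hG₂x x hx
      · intro b hb
        have H := key 1 one_pos b hb
        rw [hKx 1 one_pos] at H
        have e5 : η₁ / c₀ ^ α₁ = K₀ := by
          rw [hc₀α]; field_simp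
        rw [one_mul, e5]
        exact H
    · -- case (b)
      right
      push_neg at hconst
      obtain ⟨z, hz, hzne⟩ := hconst
      have hsub : ∀ u v : ℝ, 0 < u → 0 < v → G₂ v / G₁ v < G₂ u / G₁ u →
          ∃ c : ℝ, ∀ t > (0:ℝ), J₂ t = c * t ^ α₁ := by
        intro u v hu hv hlt
        have hru : 0 < G₂ u / G₁ u := div_pos (hG₂pos u hu) (hG₁pos u hu)
        have hrv : 0 < G₂ v / G₁ v := div_pos (hG₂pos v hv) (hG₁pos v hv)
        have hL : 1 < (G₂ u / G₁ u) / (G₂ v / G₁ v) := (one_lt_div hrv).2 hlt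
        have hfe : ∀ t ≥ (0:ℝ),
            J₂ ((G₂ u / G₁ u) / (G₂ v / G₁ v) * t) - J₂ t =
              ((η₁ * u / G₁ u ^ α₁ - η₁ * v / G₁ v ^ α₁) / (G₂ v / G₁ v) ^ α₁) * t ^ α₁ := by
          intro t ht
          have hs : 0 ≤ t / (G₂ v / G₁ v) := div_nonneg ht hrv.le
          have Hu := key u hu (t / (G₂ v / G₁ v)) hs
          have Hv := key v hv (t / (G₂ v / G₁ v)) hs
          have h1 : (G₂ u / G₁ u) * (t / (G₂ v / G₁ v)) =
              (G₂ u / G₁ u) / (G₂ v / G₁ v) * t := by ring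
          have h2 : (G₂ v / G₁ v) * (t / (G₂ v / G₁ v)) = t := by
            rw [mul_comm, div_mul_cancel₀ t (ne_of_gt hrv)]
          rw [h1] at Hu
          rw [h2] at Hv
          rw [Real.div_rpow ht hrv.le] at Hu Hv
          have hrvα : (G₂ v / G₁ v) ^ α₁ ≠ 0 := ne_of_gt (Real.rpow_pos_of_pos hrv α₁)
          linear_combination Hu - Hv
        exact ⟨_, aux_stable hα₁pos hα₂pos hL hreg₂ hfe⟩
      have hJ₂stable : ∃ c, ∀ t > (0:ℝ), J₂ t = c * t ^ α₁ := by
        rcases hzne.lt_or_gt with hlt | hlt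
        · exact hsub 1 z one_pos hz hlt
        · exact hsub z 1 hz one_pos hlt
      obtain ⟨c₂, hc₂eq₀⟩ := hJ₂stable
      have hc₂eq : ∀ t ≥ (0:ℝ), J₂ t = c₂ * t ^ α₁ := by
        intro t ht
        rcases eq_or_lt_of_le ht with h | h
        · rw [← h, hJ₂0, Real.zero_rpow hα₁ne, mul_zero]
        · exact hc₂eq₀ t h
      have hc₂pos : 0 < c₂ := by
        have h1 : c₂ = J₂ 1 := by rw [hc₂eq 1 zero_le_one, Real.one_rpow, mul_one]
        have hnn : 0 ≤ c₂ := by rw [h1]; exact hJ₂nn 1 zero_le_one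
        rcases hnn.lt_or_eq with h | h
        · exact h
        · exfalso
          obtain ⟨b, hb, hbne⟩ := hJ₂ne
          exact hbne (by rw [hc₂eq b hb, ← h, zero_mul])
      have hr1 : (0:ℝ) ≤ G₂ 1 / G₁ 1 :=
        le_of_lt (div_pos (hG₂pos 1 one_pos) (hG₁pos 1 one_pos))
      have hc₁eq : ∀ s ≥ (0:ℝ),
          J₁ s = (η₁ * 1 / G₁ 1 ^ α₁ - c₂ * (G₂ 1 / G₁ 1) ^ α₁) * s ^ α₁ := by
        intro s hs
        have H := key 1 one_pos s hs
        rw [hc₂eq (G₂ 1 / G₁ 1 * s) (mul_nonneg hr1 hs), Real.mul_rpow hr1 hs] at H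
        linear_combination H
      set c₁ := η₁ * 1 / G₁ 1 ^ α₁ - c₂ * (G₂ 1 / G₁ 1) ^ α₁ with hc₁def
      have hc₁pos : 0 < c₁ := by
        have h1 : c₁ = J₁ 1 := by rw [hc₁eq 1 zero_le_one, Real.one_rpow, mul_one]
        have hnn : 0 ≤ c₁ := by rw [h1]; exact hJ₁nn 1 zero_le_one
        rcases hnn.lt_or_eq with h | h
        · exact h
        · exfalso
          obtain ⟨b, hb, hbne⟩ := hJ₁ne
          exact hbne (by rw [hc₁eq b hb, ← h, zero_mul])
      refine ⟨c₁, hc₁pos, c₂, hc₂pos, fun b hb => ⟨hc₁eq b hb, hc₂eq b hb⟩, ?_⟩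
      intro x hx
      have H := hmain 1 zero_le_one x hx
      rw [one_mul, one_mul, Real.one_rpow, mul_one] at H
      rw [hc₁eq (G₁ x) (hG₁nn x hx), hc₂eq (G₂ x) (hG₂nn x hx)] at H
      exact H
  · rintro (⟨c₀, hc₀, g₁, hg₁, g₂, hg₂, hG, hJeq⟩ | ⟨c₁, hc₁, c₂, hc₂, hJeq, hGeq⟩) <;>
      intro b hb x hx
    · obtain ⟨hG1, hG2⟩ := hG x hx
      have hxr : (0:ℝ) ≤ x ^ (1/α₁) := Real.rpow_nonneg hx _
      have hb' : (0:ℝ) ≤ c₀ * x ^ (1/α₁) * b :=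
        mul_nonneg (mul_nonneg hc₀.le hxr) hb
      have H := hJeq (c₀ * x ^ (1/α₁) * b) hb'
      have e1 : b * G₁ x = g₁ * (c₀ * x ^ (1/α₁) * b) := by rw [hG1]; ring
      have e2 : b * G₂ x = g₂ * (c₀ * x ^ (1/α₁) * b) := by rw [hG2]; ring
      rw [e1, e2, H]
      have e3 : (c₀ * x ^ (1/α₁) * b) ^ α₁ = c₀ ^ α₁ * (x ^ (1/α₁)) ^ α₁ * b ^ α₁ := by
        rw [Real.mul_rpow (mul_nonneg hc₀.le hxr) hb, Real.mul_rpow hc₀.le hxr]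
      have e4 : (x ^ (1/α₁)) ^ α₁ = x := by
        rw [← Real.rpow_mul hx, one_div_mul_cancel (by linarith : α₁ ≠ 0), Real.rpow_one]
      rw [e3, e4]
      have e5 : η₁ / c₀ ^ α₁ * c₀ ^ α₁ = η₁ :=
        div_mul_cancel₀ η₁ (ne_of_gt (Real.rpow_pos_of_pos hc₀ α₁))
      calc η₁ / c₀ ^ α₁ * (c₀ ^ α₁ * x * b ^ α₁)
          = (η₁ / c₀ ^ α₁ * c₀ ^ α₁) * (x * b ^ α₁) := by ring
        _ = η₁ * x * b ^ α₁ := by rw [e5]; ring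
    · have h1 := (hJeq (b * G₁ x) (mul_nonneg hb (hG₁nn x hx))).1
      have h2 := (hJeq (b * G₂ x) (mul_nonneg hb (hG₂nn x hx))).2
      rw [h1, h2, Real.mul_rpow hb (hG₁nn x hx), Real.mul_rpow hb (hG₂nn x hx)]
      calc c₁ * (b ^ α₁ * G₁ x ^ α₁) + c₂ * (b ^ α₁ * G₂ x ^ α₁)
          = (c₁ * G₁ x ^ α₁ + c₂ * G₂ x ^ α₁) * b ^ α₁ := by ring
        _ = η₁ * x * b ^ α₁ := by rw [hGeq x hx]
end

section
/- Let 2 ≥ α₁ > α₂ > 1. For i = 1, 2 let q_i ≥ 0 and ν_i a Borel measure on (0, +∞) with ∫₀^∞ (v² ∧ v) ν_i(dv) < +∞, set J_i(b) = (1/2)q_i b² + ∫₀^∞ (e^{−bv} − 1 + bv) ν_i(dv), and assume J_i is not identically zero and varies regularly at 0 with index α_i, and that either q_i > 0 or ∫₀^1 v ν_i(dv) = +∞ (infinite variation). Let G₁, G₂ : [0, +∞) → [0, +∞) be continuous with G₁(x) > 0, G₂(x) > 0 for x > 0 and with G₂/G₁ continuously differentiable on (0, +∞), and let η₁, η₂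 > 0. Then the identity J₁(b·G₁(x)) + J₂(b·G₂(x)) = x·(η₁·b^{α₁} + η₂·b^{α₂}) holds for all b, x ≥ 0 if and only if there exist constants c₁, c₂ > 0 such that J₁(b) = c₁·b^{α₁} and J₂(b) = c₂·b^{α₂} for all b ≥ 0, and G₁(x) = (η₁·x/c₁)^{1/α₁}, G₂(x) = (η₂·x/c₂)^{1/α₂} for all x ≥ 0. -/
open Real Filter Set MeasureTheory


lemma gfun_nonneg (u : ℝ) : 0 ≤ Real.exp (-u) - 1 + u := by
  have := Real.add_one_le_exp (-u); linarith

lemma gfun_pos {u : ℝ} (h : 0 < u) : 0 < Real.exp (-u) - 1 + u := by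
  have := Real.add_one_lt_exp (x := -u) (by linarith); linarith

lemma gfun_le_self {u : ℝ} (hu : 0 ≤ u) : Real.exp (-u) - 1 + u ≤ u := by
  have h : Real.exp (-u) ≤ 1 := Real.exp_le_one_iff.mpr (by linarith)
  linarith

lemma gfun_le_sq {u : ℝ} (hu : 0 ≤ u) : Real.exp (-u) - 1 + u ≤ u ^ 2 := by
  rcases le_total u 1 with h1 | h1
  · have hb := Real.exp_bound (x := -u) (by rw [abs_neg, abs_of_nonneg hu]; exact h1)
      (n := 2) (by norm_num)
    have hsum : ∑ i ∈ Finset.range 2, (-u) ^ i / (Nat.factorial i : ℝ) = 1 - u := by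
      simp [Finset.sum_range_succ, Nat.factorial]; ring
    rw [hsum] at hb
    have habs : |(-u)| = u := by rw [abs_neg, abs_of_nonneg hu]
    rw [habs] at hb
    have : Real.exp (-u) - (1 - u) ≤ u ^ 2 * ((2:ℕ).succ / ((Nat.factorial 2 : ℝ) * 2)) :=
      (le_abs_self _).trans hb
    have h34 : ((2:ℕ).succ / ((Nat.factorial 2 : ℝ) * 2)) = 3/4 := by
      norm_num [Nat.factorial]
    rw [h34] at this
    nlinarith [sq_nonneg u]
  · have := gfun_le_self hu
    nlinarith

lemma gfun_mono {a b : ℝ} (ha : 0 ≤ a) (hab : a ≤ b) :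
    Real.exp (-a) - 1 + a ≤ Real.exp (-b) - 1 + b := by
  have h1 : Real.exp (-a) - Real.exp (-b) = Real.exp (-a) * (1 - Real.exp (-(b-a))) := by
    rw [mul_sub, mul_one, ← Real.exp_add]; ring_nf
  have h2 : 1 - Real.exp (-(b-a)) ≤ b - a := by
    have := Real.add_one_le_exp (-(b-a)); linarith
  have h3 : Real.exp (-a) ≤ 1 := Real.exp_le_one_iff.mpr (by linarith)
  have h4 : 0 ≤ 1 - Real.exp (-(b-a)) := by
    have := Real.exp_le_one_iff.mpr (by linarith : -(b-a) ≤ 0); linarith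
  nlinarith [Real.exp_pos (-a)]

lemma gfun_bound {b v : ℝ} (hb : 0 ≤ b) (hv : 0 < v) :
    Real.exp (-(b*v)) - 1 + b*v ≤ max (b^2) b * min (v^2) v := by
  have hbv : 0 ≤ b * v := mul_nonneg hb hv.le
  rcases le_total v 1 with h1 | h1
  · have hmin : min (v^2) v = v^2 := min_eq_left (by nlinarith)
    rw [hmin]
    calc Real.exp (-(b*v)) - 1 + b*v ≤ (b*v)^2 := gfun_le_sq hbv
      _ = b^2 * v^2 := by ring
      _ ≤ max (b^2) b * v^2 := by
          have := le_max_left (b^2) b; nlinarith [sq_nonneg v]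
  · have hmin : min (v^2) v = v := min_eq_right (by nlinarith)
    rw [hmin]
    calc Real.exp (-(b*v)) - 1 + b*v ≤ b*v := gfun_le_self hbv
      _ ≤ max (b^2) b * v := by
          have := le_max_right (b^2) b; nlinarith


lemma integrable_min_sq (ν : Measure ℝ)
    (hν : ∫⁻ v in Set.Ioi (0:ℝ), ENNReal.ofReal (min (v ^ 2) v) ∂ν < ⊤) :
    Integrable (fun v => min (v^2) v) (ν.restrict (Set.Ioi 0)) := by
  constructor
  · exact (Continuous.min (by continuity) continuous_id).aestronglyMeasurable
  · rw [hasFiniteIntegral_iff_norm]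
    have : ∫⁻ v in Set.Ioi (0:ℝ), ENNReal.ofReal ‖min (v^2) v‖ ∂ν
        = ∫⁻ v in Set.Ioi (0:ℝ), ENNReal.ofReal (min (v ^ 2) v) ∂ν := by
      apply lintegral_congr_ae
      filter_upwards [ae_restrict_mem measurableSet_Ioi] with v hv
      rw [Real.norm_of_nonneg (le_min (sq_nonneg v) (le_of_lt hv))]
    rw [this]; exact hν

lemma integrable_gfun (ν : Measure ℝ)
    (hν : ∫⁻ v in Set.Ioi (0:ℝ), ENNReal.ofReal (min (v ^ 2) v) ∂ν < ⊤)
    {b : ℝ} (hb : 0 ≤ b) :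
    Integrable (fun v => Real.exp (-(b * v)) - 1 + b * v) (ν.restrict (Set.Ioi 0)) := by
  apply Integrable.mono' (((integrable_min_sq ν hν)).const_mul (max (b^2) b))
  · exact (Continuous.aestronglyMeasurable (by continuity))
  · filter_upwards [ae_restrict_mem measurableSet_Ioi] with v hv
    rw [Real.norm_of_nonneg (gfun_nonneg _)]
    exact gfun_bound hb hv

section
variable (q : ℝ) (ν : Measure ℝ) (J : ℝ → ℝ)

lemma J_zero (hJ : ∀ b ≥ (0:ℝ), J b = (1/2) * q * b ^ 2
      + ∫ v in Set.Ioi (0:ℝ), (Real.exp (-(b * v)) - 1 + b * v) ∂ν) : J 0 = 0 := by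
  rw [hJ 0 le_rfl]; simp

lemma J_nonneg (hq : 0 ≤ q)
    (hJ : ∀ b ≥ (0:ℝ), J b = (1/2) * q * b ^ 2
      + ∫ v in Set.Ioi (0:ℝ), (Real.exp (-(b * v)) - 1 + b * v) ∂ν)
    {b : ℝ} (hb : 0 ≤ b) : 0 ≤ J b := by
  rw [hJ b hb]
  have h1 : 0 ≤ (1/2) * q * b ^ 2 := by positivity
  have h2 : 0 ≤ ∫ v in Set.Ioi (0:ℝ), (Real.exp (-(b * v)) - 1 + b * v) ∂ν :=
    integral_nonneg fun v => gfun_nonneg _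
  linarith

lemma J_mono (hq : 0 ≤ q)
    (hν : ∫⁻ v in Set.Ioi (0:ℝ), ENNReal.ofReal (min (v ^ 2) v) ∂ν < ⊤)
    (hJ : ∀ b ≥ (0:ℝ), J b = (1/2) * q * b ^ 2
      + ∫ v in Set.Ioi (0:ℝ), (Real.exp (-(b * v)) - 1 + b * v) ∂ν)
    {a b : ℝ} (ha : 0 ≤ a) (hab : a ≤ b) : J a ≤ J b := by
  rw [hJ a ha, hJ b (ha.trans hab)]
  have hsq : a ^ 2 ≤ b ^ 2 := by nlinarith
  have h1 : (1/2) * q * a ^ 2 ≤ (1/2) * q * b ^ 2 := by nlinarith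
  have h2 : ∫ v in Set.Ioi (0:ℝ), (Real.exp (-(a * v)) - 1 + a * v) ∂ν
      ≤ ∫ v in Set.Ioi (0:ℝ), (Real.exp (-(b * v)) - 1 + b * v) ∂ν := by
    apply integral_mono_ae (integrable_gfun ν hν ha) (integrable_gfun ν hν (ha.trans hab))
    filter_upwards [ae_restrict_mem measurableSet_Ioi] with v hv
    exact gfun_mono (mul_nonneg ha (Set.mem_Ioi.mp hv).le) (by nlinarith [(Set.mem_Ioi.mp hv).le])
  linarith

lemma J_pos (hq : 0 ≤ q)
    (hν : ∫⁻ v in Set.Ioi (0:ℝ), ENNReal.ofReal (min (v ^ 2) v) ∂ν < ⊤)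
    (hJ : ∀ b ≥ (0:ℝ), J b = (1/2) * q * b ^ 2
      + ∫ v in Set.Ioi (0:ℝ), (Real.exp (-(b * v)) - 1 + b * v) ∂ν)
    (hiv : 0 < q ∨ ∫⁻ v in Set.Ioc (0:ℝ) 1, ENNReal.ofReal v ∂ν = ⊤)
    {b : ℝ} (hb : 0 < b) : 0 < J b := by
  rw [hJ b hb.le]
  have h2 : 0 ≤ ∫ v in Set.Ioi (0:ℝ), (Real.exp (-(b * v)) - 1 + b * v) ∂ν :=
    integral_nonneg fun v => gfun_nonneg _
  rcases hiv with hqpos | hinf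
  · have : 0 < (1/2) * q * b ^ 2 := by positivity
    linarith
  · have h1 : 0 ≤ (1/2) * q * b ^ 2 := by positivity
    rcases h2.lt_or_eq with h | h
    · linarith
    · exfalso
      have hzero : (fun v => Real.exp (-(b * v)) - 1 + b * v)
          =ᵐ[ν.restrict (Set.Ioi 0)] 0 := by
        rw [← integral_eq_zero_iff_of_nonneg (fun v => gfun_nonneg _)
          (integrable_gfun ν hν hb.le)]
        exact h.symm
      have hmass : ν (Set.Ioc (0:ℝ) 1) = ⊤ := by
        have hle : ∫⁻ v in Set.Ioc (0:ℝ) 1, ENNReal.ofReal v ∂ν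
            ≤ ∫⁻ _ in Set.Ioc (0:ℝ) 1, 1 ∂ν := by
          apply lintegral_mono_ae
          filter_upwards [ae_restrict_mem measurableSet_Ioc] with v hv
          simpa using ENNReal.ofReal_le_one.mpr hv.2
        rw [setLIntegral_one] at hle
        rw [hinf] at hle
        exact top_le_iff.mp hle
      have hsub : Set.Ioc (0:ℝ) 1 ⊆ {v | ¬ (Real.exp (-(b * v)) - 1 + b * v) = 0} := by
        intro v hv
        exact ne_of_gt (gfun_pos (by nlinarith [hv.1]))
      have hzero' : ∀ᵐ v ∂(ν.restrict (Set.Ioi 0)), Real.exp (-(b * v)) - 1 + b * v = 0 := by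
        filter_upwards [hzero] with v hv; simpa using hv
      have : (ν.restrict (Set.Ioi 0)) {v | ¬ (Real.exp (-(b * v)) - 1 + b * v) = 0} = 0 :=
        ae_iff.mp hzero'
      have hge : ν (Set.Ioc (0:ℝ) 1)
          ≤ (ν.restrict (Set.Ioi 0)) {v | ¬ (Real.exp (-(b * v)) - 1 + b * v) = 0} := by
        rw [Measure.restrict_apply₀']
        · refine le_trans ?_ (measure_mono (Set.inter_subset_inter_left _ hsub))
          apply measure_mono
          intro v hv; exact ⟨hv, hv.1⟩
        · exact measurableSet_Ioi.nullMeasurableSet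
      rw [this] at hge
      rw [hmass] at hge
      simp at hge

lemma J_contAt
    (hν : ∫⁻ v in Set.Ioi (0:ℝ), ENNReal.ofReal (min (v ^ 2) v) ∂ν < ⊤)
    (hJ : ∀ b ≥ (0:ℝ), J b = (1/2) * q * b ^ 2
      + ∫ v in Set.Ioi (0:ℝ), (Real.exp (-(b * v)) - 1 + b * v) ∂ν)
    {p : ℝ} (hp : 0 < p) : ContinuousAt J p := by
  have hfor : ContinuousAt (fun b => (1/2) * q * b ^ 2
      + ∫ v in Set.Ioi (0:ℝ), (Real.exp (-(b * v)) - 1 + b * v) ∂ν) p := by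
    apply ContinuousAt.add
    · exact (by fun_prop : Continuous fun b : ℝ => (1/2) * q * b ^ 2).continuousAt
    · apply continuousAt_of_dominated (bound := fun v => max ((p+1)^2) (p+1) * min (v^2) v)
      · filter_upwards with b
        exact Continuous.aestronglyMeasurable (by continuity)
      · have hev : ∀ᶠ b in nhds p, b ∈ Set.Ioo 0 (p+1) :=
          Ioo_mem_nhds hp (by linarith)
        filter_upwards [hev] with b hb
        filter_upwards [ae_restrict_mem measurableSet_Ioi] with v hv
        rw [Real.norm_of_nonneg (gfun_nonneg _)]
        calc Real.exp (-(b * v)) - 1 + b * v ≤ max (b^2) b * min (v^2) v :=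
              gfun_bound hb.1.le hv
          _ ≤ max ((p+1)^2) (p+1) * min (v^2) v := by
              have hmin : 0 ≤ min (v^2) v := le_min (sq_nonneg v) hv.le
              have : max (b^2) b ≤ max ((p+1)^2) (p+1) := by
                apply max_le
                · exact le_max_of_le_left (by nlinarith [hb.1.le, hb.2.le])
                · exact le_max_of_le_right hb.2.le
              nlinarith
      · exact ((integrable_min_sq ν hν).const_mul _)
      · filter_upwards with v
        exact Continuous.continuousAt (by continuity)
  apply ContinuousAt.congr hfor
  filter_upwards [Ioi_mem_nhds hp] with b hb
  exact (hJ b (le_of_lt hb)).symm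

end


lemma rv_upper {J : ℝ → ℝ} {α β : ℝ} (hβ : 0 < β) (hβα : β < α)
    (hmono : ∀ a b : ℝ, 0 ≤ a → a ≤ b → J a ≤ J b) (hpos : ∀ b : ℝ, 0 < b → 0 < J b)
    (hreg : Tendsto (fun x => J ((1/2 : ℝ) * x) / J x)
      (nhdsWithin 0 (Set.Ioi 0)) (nhds ((1/2:ℝ) ^ α))) :
    ∃ C > (0:ℝ), ∃ δ > (0:ℝ), ∀ u : ℝ, 0 < u → u ≤ δ → J u ≤ C * u ^ β := by
  classical
  have hlt : ((1/2:ℝ)) ^ α < (1/2:ℝ) ^ β :=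
    Real.rpow_lt_rpow_of_exponent_gt (by norm_num) (by norm_num) hβα
  have hev : ∀ᶠ x in nhdsWithin (0:ℝ) (Set.Ioi 0), J ((1/2:ℝ) * x) / J x < (1/2:ℝ) ^ β :=
    hreg.eventually_lt_const hlt
  obtain ⟨δ, hδpos, hδ⟩ := mem_nhdsGT_iff_exists_Ioc_subset.mp hev
  have hδ0 : (0:ℝ) < δ := hδpos
  have hhalf : ∀ x : ℝ, 0 < x → x ≤ δ → J ((1/2:ℝ) * x) ≤ (1/2:ℝ) ^ β * J x := by
    intro x hx hxδ
    have := hδ ⟨hx, hxδ⟩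
    have hJx : 0 < J x := hpos x hx
    have := (div_lt_iff₀ hJx).mp this
    linarith
  have hiter : ∀ n : ℕ, J (δ / 2 ^ n) ≤ ((1/2:ℝ) ^ β) ^ n * J δ := by
    intro n
    induction n with
    | zero => simp
    | succ n ih =>
      have hpt : (0:ℝ) < δ / 2 ^ n := by positivity
      have hle : δ / 2 ^ n ≤ δ := by
        apply div_le_self hδ0.le
        exact one_le_pow₀ (by norm_num)
      have h1 : δ / 2 ^ (n+1) = (1/2:ℝ) * (δ / 2 ^ n) := by
        rw [pow_succ]; ring
      rw [h1]
      calc J ((1/2:ℝ) * (δ / 2 ^ n)) ≤ (1/2:ℝ) ^ β * J (δ / 2 ^ n) := hhalf _ hpt hle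
        _ ≤ (1/2:ℝ) ^ β * (((1/2:ℝ) ^ β) ^ n * J δ) := by
            have h0 : (0:ℝ) ≤ (1/2:ℝ) ^ β := Real.rpow_nonneg (by norm_num) _
            exact mul_le_mul_of_nonneg_left ih h0
        _ = ((1/2:ℝ) ^ β) ^ (n+1) * J δ := by ring
  refine ⟨J δ * (2/δ) ^ β, mul_pos (hpos δ hδ0) (by positivity), δ, hδ0, ?_⟩
  intro u hu huδ
  have hex : ∃ m : ℕ, δ < u * 2 ^ (m+1) := by
    obtain ⟨m, hm⟩ := pow_unbounded_of_one_lt (δ / u) (by norm_num : (1:ℝ) < 2)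
    exact ⟨m, by
      have h2 : (2:ℝ) ^ m ≤ 2 ^ (m+1) := by
        apply pow_le_pow_right₀ (by norm_num); omega
      have := (div_lt_iff₀ hu).mp hm
      nlinarith [pow_pos (show (0:ℝ) < 2 by norm_num) m]⟩
  set n := Nat.find hex with hn
  have hfound : δ < u * 2 ^ (n+1) := Nat.find_spec hex
  have hun : u ≤ δ / 2 ^ n := by
    rcases Nat.eq_zero_or_pos n with h0 | h0
    · simpa [h0] using huδ
    · have := Nat.find_min hex (m := n - 1) (by omega)
      push_neg at this
      have heq : n - 1 + 1 = n := by omega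
      rw [heq] at this
      rw [le_div_iff₀ (by positivity)]
      linarith
  have h1 : J u ≤ J (δ / 2 ^ n) := hmono u _ hu.le hun
  have h2 : J (δ / 2 ^ n) ≤ ((1/2:ℝ) ^ β) ^ n * J δ := hiter n
  have h3 : ((1/2:ℝ) ^ β) ^ n = ((1/2:ℝ) ^ n : ℝ) ^ β := by
    rw [← Real.rpow_natCast ((1/2:ℝ) ^ β) n, ← Real.rpow_natCast (1/2:ℝ) n,
      ← Real.rpow_mul (by norm_num), ← Real.rpow_mul (by norm_num), mul_comm]
  have h4 : ((1/2:ℝ) ^ n : ℝ) = (δ / 2 ^ (n+1)) * (2/δ) := by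
    field_simp; rw [pow_succ, ← mul_assoc, ← mul_pow]; norm_num
  have h5 : ((1/2:ℝ) ^ n : ℝ) ^ β ≤ (u * (2/δ)) ^ β := by
    apply Real.rpow_le_rpow (by positivity) _ hβ.le
    rw [h4]
    apply mul_le_mul_of_nonneg_right _ (by positivity)
    rw [div_le_iff₀ (by positivity)]
    linarith
  calc J u ≤ ((1/2:ℝ) ^ β) ^ n * J δ := h1.trans h2
    _ = ((1/2:ℝ) ^ n : ℝ) ^ β * J δ := by rw [h3]
    _ ≤ (u * (2/δ)) ^ β * J δ := by
        apply mul_le_mul_of_nonneg_right h5 (hpos δ hδ0).le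
    _ = J δ * (2/δ) ^ β * u ^ β := by
        rw [Real.mul_rpow hu.le (by positivity)]; ring

lemma aux_alg1 {A c w qn qm1 : ℝ} (hqn : qn ≠ 0) (hqm1 : qm1 ≠ 0) :
    A + c * (w / qn) * ((qn - 1) / qm1) = A + c * w / qm1 * (1 - 1 / qn) := by
  field_simp

lemma aux_alg2 {A c w qn q : ℝ} (hq : q - 1 ≠ 0) :
    A + c * w * ((qn - 1) / (q - 1)) + c * (qn * w) = A + c * w * ((qn * q - 1) / (q - 1)) := by
  field_simp
  ring


set_option maxHeartbeats 1000000 in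
lemma forward_dir (α₁ α₂ : ℝ) (hα₂ : 1 < α₂) (hα₁₂ : α₂ < α₁) (hα₁ : α₁ ≤ 2)
    (q₁ q₂ : ℝ) (hq₁ : 0 ≤ q₁) (hq₂ : 0 ≤ q₂)
    (ν₁ ν₂ : Measure ℝ)
    (hν₁ : ∫⁻ v in Set.Ioi (0:ℝ), ENNReal.ofReal (min (v ^ 2) v) ∂ν₁ < ⊤)
    (hν₂ : ∫⁻ v in Set.Ioi (0:ℝ), ENNReal.ofReal (min (v ^ 2) v) ∂ν₂ < ⊤)
    (J₁ J₂ : ℝ → ℝ)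
    (hJ₁ : ∀ b ≥ (0:ℝ), J₁ b = (1/2) * q₁ * b ^ 2
        + ∫ v in Set.Ioi (0:ℝ), (Real.exp (-(b * v)) - 1 + b * v) ∂ν₁)
    (hJ₂ : ∀ b ≥ (0:ℝ), J₂ b = (1/2) * q₂ * b ^ 2
        + ∫ v in Set.Ioi (0:ℝ), (Real.exp (-(b * v)) - 1 + b * v) ∂ν₂)
    (hJ₁ne : ∃ b ≥ (0:ℝ), J₁ b ≠ 0) (hJ₂ne : ∃ b ≥ (0:ℝ), J₂ b ≠ 0)
    (hreg₁ : ∀ b > (0:ℝ), Tendsto (fun x => J₁ (b * x) / J₁ x)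
      (nhdsWithin 0 (Set.Ioi 0)) (nhds (b ^ α₁)))
    (hreg₂ : ∀ b > (0:ℝ), Tendsto (fun x => J₂ (b * x) / J₂ x)
      (nhdsWithin 0 (Set.Ioi 0)) (nhds (b ^ α₂)))
    (hiv₁ : 0 < q₁ ∨ ∫⁻ v in Set.Ioc (0:ℝ) 1, ENNReal.ofReal v ∂ν₁ = ⊤)
    (hiv₂ : 0 < q₂ ∨ ∫⁻ v in Set.Ioc (0:ℝ) 1, ENNReal.ofReal v ∂ν₂ = ⊤)
    (G₁ G₂ : ℝ → ℝ)
    (hG₁c : ContinuousOn G₁ (Set.Ici 0)) (hG₂c : ContinuousOn G₂ (Set.Ici 0))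
    (hG₁nn : ∀ x ≥ (0:ℝ), 0 ≤ G₁ x) (hG₂nn : ∀ x ≥ (0:ℝ), 0 ≤ G₂ x)
    (hG₁pos : ∀ x > (0:ℝ), 0 < G₁ x) (hG₂pos : ∀ x > (0:ℝ), 0 < G₂ x)
    (hratio : ContDiffOn ℝ 1 (fun x => G₂ x / G₁ x) (Set.Ioi 0))
    (η₁ η₂ : ℝ) (hη₁ : 0 < η₁) (hη₂ : 0 < η₂)
    (h : ∀ b ≥ (0:ℝ), ∀ x ≥ (0:ℝ),
        J₁ (b * G₁ x) + J₂ (b * G₂ x) = x * (η₁ * b ^ α₁ + η₂ * b ^ α₂)) :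
      (∃ c₁ > (0:ℝ), ∃ c₂ > (0:ℝ),
        (∀ b ≥ (0:ℝ), J₁ b = c₁ * b ^ α₁ ∧ J₂ b = c₂ * b ^ α₂) ∧
        (∀ x ≥ (0:ℝ), G₁ x = (η₁ * x / c₁) ^ (1 / α₁) ∧
          G₂ x = (η₂ * x / c₂) ^ (1 / α₂))) := by
  -- numeric facts
  have hα₂0 : (0:ℝ) < α₂ := by linarith
  have hα₁0 : (0:ℝ) < α₁ := by linarith
  have hα₂ne : α₂ ≠ 0 := ne_of_gt hα₂0
  have hα₁ne : α₁ ≠ 0 := ne_of_gt hα₁0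
  -- J basics
  have hJ₁z : J₁ 0 = 0 := J_zero q₁ ν₁ J₁ hJ₁
  have hJ₂z : J₂ 0 = 0 := J_zero q₂ ν₂ J₂ hJ₂
  have hJ₁nn : ∀ b : ℝ, 0 ≤ b → 0 ≤ J₁ b := fun b hb => J_nonneg q₁ ν₁ J₁ hq₁ hJ₁ hb
  have hJ₂nn : ∀ b : ℝ, 0 ≤ b → 0 ≤ J₂ b := fun b hb => J_nonneg q₂ ν₂ J₂ hq₂ hJ₂ hb
  have hJ₁mono : ∀ a b : ℝ, 0 ≤ a → a ≤ b → J₁ a ≤ J₁ b :=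
    fun a b ha hab => J_mono q₁ ν₁ J₁ hq₁ hν₁ hJ₁ ha hab
  have hJ₁pos : ∀ b : ℝ, 0 < b → 0 < J₁ b := fun b hb => J_pos q₁ ν₁ J₁ hq₁ hν₁ hJ₁ hiv₁ hb
  have hJ₂pos : ∀ b : ℝ, 0 < b → 0 < J₂ b := fun b hb => J_pos q₂ ν₂ J₂ hq₂ hν₂ hJ₂ hiv₂ hb
  have hJ₁cont : ∀ p : ℝ, 0 < p → ContinuousAt J₁ p := fun p hp => J_contAt q₁ ν₁ J₁ hν₁ hJ₁ hp
  -- Step A : G at 0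
  have hkey0 : J₁ (G₁ 0) + J₂ (G₂ 0) = 0 := by
    have h0 := h 1 zero_le_one 0 le_rfl
    simpa using h0
  have hG₁0 : G₁ 0 = 0 := by
    by_contra hne
    have hpos : 0 < G₁ 0 := lt_of_le_of_ne (hG₁nn 0 le_rfl) (Ne.symm hne)
    have h1 := hJ₁pos _ hpos
    have h2 := hJ₂nn _ (hG₂nn 0 le_rfl)
    linarith
  have hG₂0 : G₂ 0 = 0 := by
    by_contra hne
    have hpos : 0 < G₂ 0 := lt_of_le_of_ne (hG₂nn 0 le_rfl) (Ne.symm hne)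
    have h1 := hJ₂pos _ hpos
    have h2 := hJ₁nn _ (hG₁nn 0 le_rfl)
    linarith
  -- Step B : rv upper bound for J₁ with exponent β
  set β : ℝ := (α₁ + α₂) / 2 with hβdef
  have hβpos : 0 < β := by simp only [hβdef]; linarith
  have hβα₁ : β < α₁ := by simp only [hβdef]; linarith
  have hα₂β : α₂ < β := by simp only [hβdef]; linarith
  obtain ⟨C₁, hC₁, δ₁, hδ₁, hB⟩ := rv_upper hβpos hβα₁ hJ₁mono hJ₁pos
    (hreg₁ (1/2) (by norm_num))
  -- Step C : limit of J₂ (b G₂ x) / b^α₂ as b → 0+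
  have hC : ∀ x : ℝ, 0 < x → Tendsto (fun b : ℝ => J₂ (b * G₂ x) / b ^ α₂)
      (nhdsWithin 0 (Set.Ioi 0)) (nhds (x * η₂)) := by
    intro x hx
    have hG1x := hG₁pos x hx
    have hev : ∀ᶠ b in nhdsWithin (0:ℝ) (Set.Ioi 0), J₂ (b * G₂ x) / b ^ α₂
        = x * η₁ * b ^ (α₁ - α₂) + x * η₂ - J₁ (b * G₁ x) / b ^ α₂ := by
      filter_upwards [self_mem_nhdsWithin] with b hb
      have hb0 : (0:ℝ) < b := hb
      have hid := h b hb0.le x hx.le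
      have hbα : b ^ α₂ ≠ 0 := (Real.rpow_pos_of_pos hb0 _).ne'
      have hJ2e : J₂ (b * G₂ x) = x*η₁*b ^ α₁ + x*η₂*b ^ α₂ - J₁ (b * G₁ x) := by
        ring_nf at hid ⊢; linarith
      rw [hJ2e, Real.rpow_sub hb0]
      field_simp
    apply Tendsto.congr' (Filter.EventuallyEq.symm hev)
    have l1 : Tendsto (fun b : ℝ => x * η₁ * b ^ (α₁ - α₂)) (nhdsWithin 0 (Set.Ioi 0))
        (nhds 0) := by
      have lr : Tendsto (fun b : ℝ => b ^ (α₁ - α₂)) (nhdsWithin 0 (Set.Ioi 0)) (nhds 0) := by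
        have hc : ContinuousAt (fun b : ℝ => b ^ (α₁ - α₂)) 0 :=
          Real.continuousAt_rpow_const 0 _ (Or.inr (by linarith))
        have := hc.tendsto.mono_left (nhdsWithin_le_nhds (s := Set.Ioi (0:ℝ)))
        rwa [Real.zero_rpow (by linarith : α₁ - α₂ ≠ 0)] at this
      have := lr.const_mul (x * η₁)
      simpa using this
    have l3 : Tendsto (fun b : ℝ => J₁ (b * G₁ x) / b ^ α₂) (nhdsWithin 0 (Set.Ioi 0))
        (nhds 0) := by
      have hup : Tendsto (fun b : ℝ => (C₁ * G₁ x ^ β) * b ^ (β - α₂))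
          (nhdsWithin 0 (Set.Ioi 0)) (nhds 0) := by
        have hc : ContinuousAt (fun b : ℝ => b ^ (β - α₂)) 0 :=
          Real.continuousAt_rpow_const 0 _ (Or.inr (by linarith))
        have h2 := hc.tendsto.mono_left (nhdsWithin_le_nhds (s := Set.Ioi (0:ℝ)))
        rw [Real.zero_rpow (by linarith : β - α₂ ≠ 0)] at h2
        have := h2.const_mul (C₁ * G₁ x ^ β)
        simpa using this
      apply tendsto_of_tendsto_of_tendsto_of_le_of_le' tendsto_const_nhds hup
      · filter_upwards [self_mem_nhdsWithin] with b hb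
        have hb0 : (0:ℝ) < b := hb
        exact div_nonneg (hJ₁nn _ (by positivity)) (Real.rpow_pos_of_pos hb0 _).le
      · have hmem : Set.Ioo (0:ℝ) (δ₁ / G₁ x) ∈ nhdsWithin (0:ℝ) (Set.Ioi 0) :=
          Ioo_mem_nhdsGT_of_mem ⟨le_refl 0, div_pos hδ₁ hG1x⟩
        filter_upwards [hmem] with b hb
        have hb0 : (0:ℝ) < b := hb.1
        have hbG : 0 < b * G₁ x := by positivity
        have hbGδ : b * G₁ x ≤ δ₁ := by
          rw [← le_div_iff₀ hG1x]; exact hb.2.le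
        have hJb := hB (b * G₁ x) hbG hbGδ
        rw [Real.mul_rpow hb0.le hG1x.le] at hJb
        rw [div_le_iff₀ (Real.rpow_pos_of_pos hb0 α₂), Real.rpow_sub hb0]
        have heq : C₁ * G₁ x ^ β * (b ^ β / b ^ α₂) * b ^ α₂ = C₁ * (b ^ β * G₁ x ^ β) := by
          have hbα : b ^ α₂ ≠ 0 := (Real.rpow_pos_of_pos hb0 _).ne'
          rw [mul_assoc, div_mul_cancel₀ _ hbα]; ring
        rw [heq]
        exact hJb
    have := (l1.add (tendsto_const_nhds (x := x * η₂))).sub l3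
    simpa using this
  -- Step C2 : scaling relation for G₂
  have hGG : ∀ x : ℝ, 0 < x → ∀ y : ℝ, 0 < y → (G₂ x / G₂ y) ^ α₂ = x / y := by
    intro x hx y hy
    have hG2x := hG₂pos x hx
    have hG2y := hG₂pos y hy
    have hcpos : 0 < G₂ x / G₂ y := div_pos hG2x hG2y
    have t1 : Tendsto (fun b : ℝ => J₂ (b * G₂ x) / J₂ (b * G₂ y))
        (nhdsWithin 0 (Set.Ioi 0)) (nhds (x / y)) := by
      have := (hC x hx).div (hC y hy) (mul_pos hy hη₂).ne'
      have heq : (fun b : ℝ => (J₂ (b * G₂ x) / b ^ α₂) / (J₂ (b * G₂ y) / b ^ α₂))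
          =ᶠ[nhdsWithin (0:ℝ) (Set.Ioi 0)] fun b => J₂ (b * G₂ x) / J₂ (b * G₂ y) := by
        filter_upwards [self_mem_nhdsWithin] with b hb
        have hb0 : (0:ℝ) < b := hb
        have hbα : b ^ α₂ ≠ 0 := (Real.rpow_pos_of_pos hb0 _).ne'
        field_simp
      have h2 := Tendsto.congr' heq this
      have : x * η₂ / (y * η₂) = x / y := by
        field_simp
      rwa [this] at h2
    have t2 : Tendsto (fun b : ℝ => J₂ (b * G₂ x) / J₂ (b * G₂ y))
        (nhdsWithin 0 (Set.Ioi 0)) (nhds ((G₂ x / G₂ y) ^ α₂)) := by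
      have hcomp : Tendsto (fun b : ℝ => b * G₂ y) (nhdsWithin 0 (Set.Ioi 0))
          (nhdsWithin 0 (Set.Ioi 0)) := by
        apply tendsto_nhdsWithin_of_tendsto_nhds_of_eventually_within
        · have : Tendsto (fun b : ℝ => b * G₂ y) (nhds 0) (nhds (0 * G₂ y)) :=
            (continuous_id.mul continuous_const).tendsto 0
          simpa using this.mono_left nhdsWithin_le_nhds
        · filter_upwards [self_mem_nhdsWithin] with b hb
          have hb0 : (0:ℝ) < b := hb
          exact mul_pos hb0 hG2y
      have := (hreg₂ (G₂ x / G₂ y) hcpos).comp hcomp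
      apply this.congr
      intro b
      simp only [Function.comp]
      congr 2
      field_simp
    exact tendsto_nhds_unique t2 t1
  -- Step D : form of G₂
  have hg₂pos : 0 < G₂ 1 := hG₂pos 1 one_pos
  have hG₂x : ∀ x : ℝ, 0 < x → G₂ x = G₂ 1 * x ^ (α₂⁻¹) := by
    intro x hx
    have hgg : (G₂ x / G₂ 1) ^ α₂ = x := by
      have := hGG x hx 1 one_pos
      simpa using this
    have hcpos : 0 < G₂ x / G₂ 1 := div_pos (hG₂pos x hx) hg₂pos
    have hdiv : G₂ x / G₂ 1 = x ^ (α₂⁻¹) := by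
      conv_lhs => rw [← Real.rpow_rpow_inv hcpos.le hα₂ne]
      rw [hgg]
    rw [div_eq_iff (ne_of_gt hg₂pos)] at hdiv
    rw [hdiv]; ring
  -- Step E : the key identity
  have hg₂ne : G₂ 1 ≠ 0 := ne_of_gt hg₂pos
  have KEY : ∀ x : ℝ, 0 < x → ∀ t : ℝ, 0 < t →
      J₁ (t * (G₁ x * x ^ (-α₂⁻¹))) = η₁ * x ^ (1 - α₁/α₂) * t ^ α₁
        + (η₂ * t ^ α₂ - J₂ (G₂ 1 * t)) := by
    intro x hx t ht
    set b := t * x ^ (-α₂⁻¹) with hbdef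
    have hxc : (0:ℝ) < x ^ (-α₂⁻¹) := Real.rpow_pos_of_pos hx _
    have hb0 : (0:ℝ) < b := mul_pos ht hxc
    have hid := h b hb0.le x hx.le
    have hc1 : b * G₁ x = t * (G₁ x * x ^ (-α₂⁻¹)) := by rw [hbdef]; ring
    have hxcne : (x:ℝ) ^ (α₂⁻¹) ≠ 0 := (Real.rpow_pos_of_pos hx _).ne'
    have hc2 : b * G₂ x = G₂ 1 * t := by
      rw [hbdef, hG₂x x hx, Real.rpow_neg hx.le]
      field_simp
    have e1 : b ^ α₁ = t ^ α₁ * x ^ (-α₂⁻¹ * α₁) := by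
      rw [hbdef, Real.mul_rpow ht.le hxc.le, ← Real.rpow_mul hx.le]
    have e2 : b ^ α₂ = t ^ α₂ * x ^ (-(1:ℝ)) := by
      rw [hbdef, Real.mul_rpow ht.le hxc.le, ← Real.rpow_mul hx.le]
      congr 2
      field_simp
    have e3 : x * x ^ (-α₂⁻¹ * α₁) = x ^ (1 - α₁/α₂) := by
      have he : (1 : ℝ) - α₁/α₂ = 1 + (-α₂⁻¹ * α₁) := by
        rw [div_eq_mul_inv]; ring
      rw [he, Real.rpow_add hx, Real.rpow_one]
    have e4 : x * x ^ (-(1:ℝ)) = 1 := by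
      rw [Real.rpow_neg_one]
      field_simp
    rw [hc1, hc2, e1, e2] at hid
    linear_combination hid + η₁ * t ^ α₁ * e3 + η₂ * t ^ α₂ * e4
  -- Step F : the decreasing sequence
  set e : ℝ := 1 - α₁/α₂ with hedef
  have hepos : 0 < α₁/α₂ - 1 := by
    rw [lt_sub_iff_add_lt, zero_add, lt_div_iff₀ hα₂0]
    linarith
  have heneg : e < 0 := by simp only [hedef]; linarith
  set Dg : ℝ → ℝ := fun t => η₂ * t ^ α₂ - J₂ (G₂ 1 * t) with hDgdef
  set rf : ℝ → ℝ := fun x => G₁ x * x ^ (-α₂⁻¹) with hrfdef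
  have hrfpos : ∀ x : ℝ, 0 < x → 0 < rf x := fun x hx =>
    mul_pos (hG₁pos x hx) (Real.rpow_pos_of_pos hx _)
  set a : ℕ → ℝ := fun n => rf ((n:ℝ) + 1) with hadef
  have hapos : ∀ n, 0 < a n := fun n => hrfpos _ (by positivity)
  have hKa : ∀ n : ℕ, ∀ t : ℝ, 0 < t →
      J₁ (t * a n) = η₁ * ((n:ℝ) + 1) ^ e * t ^ α₁ + Dg t :=
    fun n t ht => KEY ((n:ℝ)+1) (by positivity) t ht
  have hanti : Antitone a := by
    intro m n hmn
    rcases eq_or_lt_of_le hmn with heq | hlt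
    · rw [heq]
    · by_contra hcon
      push_neg at hcon
      have h1 : J₁ (1 * a m) ≤ J₁ (1 * a n) := by
        rw [one_mul, one_mul]
        exact hJ₁mono _ _ (hapos m).le hcon.le
      rw [hKa m 1 one_pos, hKa n 1 one_pos] at h1
      have h2 : ((n:ℝ) + 1) ^ e < ((m:ℝ) + 1) ^ e := by
        apply Real.rpow_lt_rpow_of_neg (by positivity) _ heneg
        have : (m:ℝ) < n := by exact_mod_cast hlt
        linarith
      simp only [Real.one_rpow, mul_one] at h1
      nlinarith
  have hbdd : BddBelow (Set.range a) := ⟨0, fun z ⟨n, hn⟩ => hn ▸ (hapos n).le⟩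
  set r : ℝ := ⨅ n, a n with hrdef
  have hrle : ∀ n, r ≤ a n := fun n => ciInf_le hbdd n
  have hr0le : 0 ≤ r := le_ciInf fun n => (hapos n).le
  have htend : Tendsto a atTop (nhds r) := tendsto_atTop_ciInf hanti hbdd
  -- Step G : limit identity
  have hnlim : Tendsto (fun n : ℕ => ((n:ℝ) + 1) ^ e) atTop (nhds 0) := by
    have h1 : Tendsto (fun z : ℝ => z ^ (-(α₁/α₂ - 1))) atTop (nhds 0) :=
      tendsto_rpow_neg_atTop hepos
    have h2 : Tendsto (fun n : ℕ => (n:ℝ) + 1) atTop atTop :=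
      tendsto_atTop_add_const_right _ _ tendsto_natCast_atTop_atTop
    have h3 := h1.comp h2
    have he2 : e = -(α₁/α₂ - 1) := by simp only [hedef]; ring
    rw [he2]
    exact h3
  have hlim : ∀ t : ℝ, 0 < t → Tendsto (fun n : ℕ => J₁ (t * a n)) atTop (nhds (Dg t)) := by
    intro t ht
    have hfe : (fun n : ℕ => J₁ (t * a n))
        = fun n : ℕ => η₁ * ((n:ℝ) + 1) ^ e * t ^ α₁ + Dg t := by
      funext n
      exact hKa n t ht
    rw [hfe]
    have := ((hnlim.const_mul η₁).mul_const (t ^ α₁)).add_const (Dg t)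
    simpa using this
  have hβne : β ≠ 0 := ne_of_gt hβpos
  clear_value β e Dg rf a r
  -- r = 0 by contradiction
  have hr0 : r = 0 := by
    by_contra hne
    have hrpos : 0 < r := lt_of_le_of_ne hr0le (Ne.symm hne)
    have hrα : r ^ α₁ ≠ 0 := (Real.rpow_pos_of_pos hrpos _).ne'
    have hJr : ∀ t : ℝ, 0 < t → J₁ (t * r) = Dg t := by
      intro t ht
      have htr : 0 < t * r := mul_pos ht hrpos
      have hcont := (hJ₁cont (t * r) htr).tendsto
      have hseq : Tendsto (fun n : ℕ => t * a n) atTop (nhds (t * r)) :=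
        htend.const_mul t
      exact tendsto_nhds_unique (hcont.comp hseq) (hlim t ht)
    have ha0r : r < a 0 := by
      rcases eq_or_lt_of_le (hrle 0) with heq | hlt
      · exfalso
        have ha1 : a 1 = r := le_antisymm (heq ▸ hanti (by norm_num : (0:ℕ) ≤ 1)) (hrle 1)
        have k0 := hKa 0 1 one_pos
        have k1 := hKa 1 1 one_pos
        rw [← heq] at k0
        rw [ha1] at k1
        have hAB : η₁ * (((0:ℕ):ℝ) + 1) ^ e * (1:ℝ) ^ α₁ + Dg 1
            = η₁ * (((1:ℕ):ℝ) + 1) ^ e * (1:ℝ) ^ α₁ + Dg 1 := by rw [← k0, ← k1]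
        have h2e : ((2:ℝ)) ^ e < 1 := Real.rpow_lt_one_of_one_lt_of_neg (by norm_num) heneg
        have h12 : (((1:ℕ):ℝ) + 1) = (2:ℝ) := by norm_num
        rw [h12] at hAB
        simp only [Nat.cast_zero, zero_add, Real.one_rpow, mul_one] at hAB
        have hmul : η₁ * (2:ℝ) ^ e < η₁ * 1 := mul_lt_mul_of_pos_left h2e hη₁
        rw [mul_one] at hmul
        linarith
      · exact hlt
    set s : ℝ := a 0 / r with hsdef
    have hs1 : 1 < s := (one_lt_div hrpos).mpr ha0r
    have hs0 : 0 < s := lt_trans one_pos hs1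
    set q : ℝ := s ^ α₁ with hqdef
    have hq1 : 1 < q := by
      rw [hqdef, Real.one_lt_rpow_iff_of_pos hs0]
      exact Or.inl ⟨hs1, hα₁0⟩
    have hq0 : 0 < q := lt_trans one_pos hq1
    have hq1' : 0 < q - 1 := by linarith
    have hqne : q - 1 ≠ 0 := ne_of_gt hq1'
    have hsnq : ∀ n : ℕ, ((s ^ n : ℝ)) ^ α₁ = q ^ n := by
      intro n
      rw [hqdef, ← Real.rpow_natCast s n, ← Real.rpow_mul hs0.le, mul_comm (n:ℝ) α₁,
        Real.rpow_mul hs0.le, Real.rpow_natCast]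
    have hstep : ∀ w : ℝ, 0 < w → J₁ (s * w) = J₁ w + (η₁ / r ^ α₁) * w ^ α₁ := by
      intro w hw
      have hwr : 0 < w / r := div_pos hw hrpos
      have k := hKa 0 (w / r) hwr
      have hJrw := hJr (w / r) hwr
      have hc1 : (w / r) * r = w := div_mul_cancel₀ w (ne_of_gt hrpos)
      have hc2 : (w / r) * a 0 = s * w := by rw [hsdef]; field_simp
      simp only [Nat.cast_zero, zero_add, Real.one_rpow, mul_one] at k
      rw [hc2] at k
      rw [hc1] at hJrw
      rw [Real.div_rpow hw.le hrpos.le] at k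
      rw [k, ← hJrw]
      ring
    clear_value s q
    have hiter : ∀ n : ℕ, ∀ w : ℝ, 0 < w →
        J₁ (s ^ n * w) = J₁ w + (η₁ / r ^ α₁) * w ^ α₁ * ((q ^ n - 1) / (q - 1)) := by
      intro n
      induction n with
      | zero => intro w hw; simp
      | succ n ih =>
        intro w hw
        have hsn : (0:ℝ) < s ^ n := pow_pos hs0 n
        have hsnw : 0 < s ^ n * w := mul_pos hsn hw
        have h1 : s ^ (n+1) * w = s * (s ^ n * w) := by ring
        rw [h1, hstep _ hsnw, ih w hw]
        have h2 : (s ^ n * w) ^ α₁ = q ^ n * w ^ α₁ := by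
          rw [Real.mul_rpow hsn.le hw.le, hsnq n]
        rw [h2, pow_succ]
        exact aux_alg2 hqne
    have hgeo : Tendsto (fun n : ℕ => (1/q) ^ n) atTop (nhds 0) :=
      tendsto_pow_atTop_nhds_zero_of_lt_one (one_div_pos.mpr hq0).le
        ((div_lt_one hq0).mpr hq1)
    have hsinv : Tendsto (fun n : ℕ => (1/s) ^ n) atTop (nhds 0) :=
      tendsto_pow_atTop_nhds_zero_of_lt_one (one_div_pos.mpr hs0).le
        ((div_lt_one hs0).mpr hs1)
    have hpow : ∀ u : ℝ, 0 < u → J₁ u = η₁ / r ^ α₁ / (q - 1) * u ^ α₁ := by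
      intro u hu
      have husn : ∀ n : ℕ, (0:ℝ) < u / s ^ n := fun n => div_pos hu (pow_pos hs0 n)
      have hconst : ∀ n : ℕ, J₁ u = J₁ (u / s ^ n)
          + (η₁ / r ^ α₁) * u ^ α₁ / (q - 1) * (1 - (1/q) ^ n) := by
        intro n
        have hsn : (0:ℝ) < s ^ n := pow_pos hs0 n
        have hc : s ^ n * (u / s ^ n) = u := by
          rw [mul_comm]; exact div_mul_cancel₀ u (ne_of_gt hsn)
        have := hiter n (u / s ^ n) (husn n)
        rw [hc] at this
        rw [this]
        have h2 : (u / s ^ n) ^ α₁ = u ^ α₁ / q ^ n := by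
          rw [Real.div_rpow hu.le hsn.le, hsnq n]
        rw [h2]
        have hqn : (q:ℝ) ^ n ≠ 0 := (pow_pos hq0 n).ne'
        rw [show ((1:ℝ)/q) ^ n = 1 / q ^ n from by rw [div_pow, one_pow]]
        exact aux_alg1 hqn hqne
      have hta : Tendsto (fun n : ℕ => u / s ^ n) atTop (nhds 0) := by
        have h1 := hsinv.const_mul u
        simp only [mul_zero] at h1
        apply h1.congr
        intro n
        rw [div_pow, one_pow]
        ring
      have t1 : Tendsto (fun n : ℕ => J₁ (u / s ^ n)) atTop (nhds 0) := by
        have hup : Tendsto (fun n : ℕ => C₁ * (u / s ^ n) ^ β) atTop (nhds 0) := by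
          have hcont : ContinuousAt (fun z : ℝ => z ^ β) 0 :=
            Real.continuousAt_rpow_const 0 _ (Or.inr hβpos.le)
          have h3 := (hcont.tendsto.comp hta).const_mul C₁
          rw [Real.zero_rpow hβne, mul_zero] at h3
          exact h3
        apply tendsto_of_tendsto_of_tendsto_of_le_of_le' tendsto_const_nhds hup
        · filter_upwards with n
          exact hJ₁nn _ (husn n).le
        · filter_upwards [hta.eventually_le_const hδ₁] with n hn
          exact hB _ (husn n) hn
      have t2 : Tendsto (fun n : ℕ => J₁ (u / s ^ n)
          + (η₁ / r ^ α₁) * u ^ α₁ / (q - 1) * (1 - (1/q) ^ n)) atTop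
          (nhds (0 + (η₁ / r ^ α₁) * u ^ α₁ / (q - 1) * (1 - 0))) :=
        t1.add (((tendsto_const_nhds (x := (1:ℝ))).sub hgeo).const_mul _)
      have t3 : Tendsto (fun _ : ℕ => J₁ u) atTop
          (nhds (0 + (η₁ / r ^ α₁) * u ^ α₁ / (q - 1) * (1 - 0))) := by
        apply Tendsto.congr _ t2
        intro n
        exact (hconst n).symm
      have := tendsto_nhds_unique t3 tendsto_const_nhds
      rw [← this]
      ring
    have hDgt : ∀ t : ℝ, 0 < t → J₂ (G₂ 1 * t) = η₂ * t ^ α₂ - (η₁ / (q - 1)) * t ^ α₁ := by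
      intro t ht
      have h1 := hJr t ht
      have h2 := hpow (t * r) (mul_pos ht hrpos)
      rw [h2, Real.mul_rpow ht.le hrpos.le] at h1
      simp only [hDgdef] at h1
      have hc : η₁ / r ^ α₁ / (q - 1) * (t ^ α₁ * r ^ α₁) = η₁ / (q - 1) * t ^ α₁ := by
        field_simp
      rw [hc] at h1
      linarith
    set t0 : ℝ := (η₂ * (q - 1) / η₁ + 1) ^ (α₁ - α₂)⁻¹ with ht0def
    have hbase : 0 < η₂ * (q - 1) / η₁ + 1 := by
      have := div_pos (mul_pos hη₂ hq1') hη₁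
      linarith
    have ht0pos : 0 < t0 := Real.rpow_pos_of_pos hbase _
    have hexp : t0 ^ (α₁ - α₂) = η₂ * (q - 1) / η₁ + 1 :=
      Real.rpow_inv_rpow hbase.le (by intro hcon; rw [sub_eq_zero] at hcon; linarith)
    have hsplit : t0 ^ α₁ = t0 ^ α₂ * t0 ^ (α₁ - α₂) := by
      rw [← Real.rpow_add ht0pos]; ring_nf
    have hJ2t0 := hDgt t0 ht0pos
    have hJ2nn' := hJ₂nn (G₂ 1 * t0) (mul_pos hg₂pos ht0pos).le
    rw [hJ2t0, hsplit, hexp] at hJ2nn'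
    have htα₂ : 0 < t0 ^ α₂ := Real.rpow_pos_of_pos ht0pos _
    have hfin : η₁ / (q-1) * (η₂ * (q-1)/η₁ + 1) = η₂ + η₁/(q-1) := by
      field_simp
    have hpos2 : 0 < η₁ / (q - 1) := div_pos hη₁ hq1'
    have hxx : η₁ / (q - 1) * (t0 ^ α₂ * (η₂ * (q - 1) / η₁ + 1))
        = t0 ^ α₂ * (η₂ + η₁ / (q - 1)) := by
      rw [show η₁ / (q - 1) * (t0 ^ α₂ * (η₂ * (q - 1) / η₁ + 1))
          = t0 ^ α₂ * (η₁ / (q-1) * (η₂ * (q-1)/η₁ + 1)) from by ring, hfin]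
    rw [hxx] at hJ2nn'
    have hneg : 0 < t0 ^ α₂ * (η₁ / (q - 1)) := mul_pos htα₂ hpos2
    nlinarith
  -- Dg vanishes
  have hDg0 : ∀ t : ℝ, 0 < t → Dg t = 0 := by
    intro t ht
    have hta : Tendsto (fun n : ℕ => t * a n) atTop (nhds 0) := by
      have h1 := htend.const_mul t
      rw [hr0, mul_zero] at h1
      exact h1
    have t1 : Tendsto (fun n : ℕ => J₁ (t * a n)) atTop (nhds 0) := by
      have hup : Tendsto (fun n : ℕ => C₁ * (t * a n) ^ β) atTop (nhds 0) := by
        have hcont : ContinuousAt (fun z : ℝ => z ^ β) 0 :=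
          Real.continuousAt_rpow_const 0 _ (Or.inr hβpos.le)
        have h3 := (hcont.tendsto.comp hta).const_mul C₁
        rw [Real.zero_rpow hβne, mul_zero] at h3
        exact h3
      apply tendsto_of_tendsto_of_tendsto_of_le_of_le' tendsto_const_nhds hup
      · filter_upwards with n
        exact hJ₁nn _ (mul_pos ht (hapos n)).le
      · filter_upwards [hta.eventually_le_const hδ₁] with n hn
        exact hB _ (mul_pos ht (hapos n)) hn
    exact (tendsto_nhds_unique (hlim t ht) t1)
  have hDg0' : ∀ t : ℝ, 0 < t → η₂ * t ^ α₂ - J₂ (G₂ 1 * t) = 0 := fun t ht => by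
    simpa [hDgdef] using hDg0 t ht
  -- conclusions
  have hg₁pos : 0 < G₁ 1 := hG₁pos 1 one_pos
  have hg₁α : (0:ℝ) < G₁ 1 ^ α₁ := Real.rpow_pos_of_pos hg₁pos _
  have hg₂α : (0:ℝ) < G₂ 1 ^ α₂ := Real.rpow_pos_of_pos hg₂pos _
  have hg₂αne : G₂ 1 ^ α₂ ≠ 0 := ne_of_gt hg₂α
  have hg₁αne : G₁ 1 ^ α₁ ≠ 0 := ne_of_gt hg₁α
  set c₁ : ℝ := η₁ / G₁ 1 ^ α₁ with hc₁def
  set c₂ : ℝ := η₂ / G₂ 1 ^ α₂ with hc₂def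
  have hc₁pos : 0 < c₁ := div_pos hη₁ hg₁α
  have hc₂pos : 0 < c₂ := div_pos hη₂ hg₂α
  have hJ₁pow : ∀ w : ℝ, 0 < w → J₁ w = c₁ * w ^ α₁ := by
    intro w hw
    have hwg : 0 < w / G₁ 1 := div_pos hw hg₁pos
    have hk := KEY 1 one_pos (w / G₁ 1) hwg
    have hz := hDg0' (w / G₁ 1) hwg
    simp only [Real.one_rpow, mul_one] at hk
    rw [div_mul_cancel₀ w (ne_of_gt hg₁pos)] at hk
    rw [Real.div_rpow hw.le hg₁pos.le] at hk
    rw [hc₁def]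
    have hr : η₁ * (w ^ α₁ / G₁ 1 ^ α₁) = η₁ / G₁ 1 ^ α₁ * w ^ α₁ := by ring
    linarith
  have hJ₂pow : ∀ u : ℝ, 0 < u → J₂ u = c₂ * u ^ α₂ := by
    intro u hu
    have hug : 0 < u / G₂ 1 := div_pos hu hg₂pos
    have hz := hDg0' (u / G₂ 1) hug
    rw [show G₂ 1 * (u / G₂ 1) = u from by rw [mul_comm]; exact div_mul_cancel₀ u hg₂ne] at hz
    rw [Real.div_rpow hu.le hg₂pos.le] at hz
    rw [hc₂def]
    have hr : η₂ * (u ^ α₂ / G₂ 1 ^ α₂) = η₂ / G₂ 1 ^ α₂ * u ^ α₂ := by ring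
    linarith
  refine ⟨c₁, hc₁pos, c₂, hc₂pos, ?_, ?_⟩
  · intro b hb
    rcases eq_or_lt_of_le hb with hb0 | hb0
    · constructor
      · rw [← hb0, hJ₁z, Real.zero_rpow hα₁ne, mul_zero]
      · rw [← hb0, hJ₂z, Real.zero_rpow hα₂ne, mul_zero]
    · exact ⟨hJ₁pow b hb0, hJ₂pow b hb0⟩
  · intro x hx
    rcases eq_or_lt_of_le hx with hx0 | hx0
    · constructor
      · rw [← hx0, hG₁0, mul_zero, zero_div, Real.zero_rpow (one_div_ne_zero hα₁ne)]
      · rw [← hx0, hG₂0, mul_zero, zero_div, Real.zero_rpow (one_div_ne_zero hα₂ne)]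
    · have hGval : (G₂ 1 * x ^ (α₂⁻¹)) ^ α₂ = G₂ 1 ^ α₂ * x := by
        rw [Real.mul_rpow hg₂pos.le (Real.rpow_nonneg hx0.le _), ← Real.rpow_mul hx0.le,
          inv_mul_cancel₀ hα₂ne, Real.rpow_one]
      have hG2form : G₂ x = (η₂ * x / c₂) ^ (1 / α₂) := by
        rw [hG₂x x hx0, hc₂def]
        have harg : η₂ * x / (η₂ / G₂ 1 ^ α₂) = G₂ 1 ^ α₂ * x := by
          field_simp
        rw [harg, one_div, Real.mul_rpow hg₂α.le hx0.le,
          Real.rpow_rpow_inv hg₂pos.le hα₂ne]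
      have hG1form : G₁ x = (η₁ * x / c₁) ^ (1 / α₁) := by
        have hid := h 1 zero_le_one x hx0.le
        simp only [one_mul, Real.one_rpow, mul_one] at hid
        have hJ2Gx : J₂ (G₂ x) = η₂ * x := by
          rw [hJ₂pow (G₂ x) (hG₂pos x hx0), hG₂x x hx0, hGval, hc₂def]
          field_simp
        have hJ1Gx : J₁ (G₁ x) = η₁ * x := by
          have hexp : x * (η₁ + η₂) = η₁ * x + η₂ * x := by ring
          rw [hexp] at hid
          linarith
        have h2 : c₁ * G₁ x ^ α₁ = η₁ * x := by
          rw [← hJ₁pow (G₁ x) (hG₁pos x hx0)]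
          exact hJ1Gx
        have h3 : G₁ x ^ α₁ = η₁ * x / c₁ := by
          rw [← h2]
          field_simp
        rw [one_div, ← h3, Real.rpow_rpow_inv (hG₁nn x hx0.le) hα₁ne]
      exact ⟨hG1form, hG2form⟩

/-- Generating equations on a plane, case `J_μ̃(b) = η₁b^{α₁} + η₂b^{α₂}` with
`2 ≥ α₁ > α₂ > 1`: the identity `J₁(bG₁(x)) + J₂(bG₂(x)) = x(η₁b^{α₁} + η₂b^{α₂})`
holds for all `b, x ≥ 0` iff `J₁(b) = c₁b^{α₁}`, `J₂(b) = c₂b^{α₂}` and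
`G₁(x) = (η₁x/c₁)^{1/α₁}`, `G₂(x) = (η₂x/c₂)^{1/α₂}` for some `c₁, c₂ > 0`. -/
theorem stmt13 (α₁ α₂ : ℝ) (hα₂ : 1 < α₂) (hα₁₂ : α₂ < α₁) (hα₁ : α₁ ≤ 2)
    (q₁ q₂ : ℝ) (hq₁ : 0 ≤ q₁) (hq₂ : 0 ≤ q₂)
    (ν₁ ν₂ : Measure ℝ)
    (hν₁ : ∫⁻ v in Set.Ioi (0:ℝ), ENNReal.ofReal (min (v ^ 2) v) ∂ν₁ < ⊤)
    (hν₂ : ∫⁻ v in Set.Ioi (0:ℝ), ENNReal.ofReal (min (v ^ 2) v) ∂ν₂ < ⊤)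
    (J₁ J₂ : ℝ → ℝ)
    (hJ₁ : ∀ b ≥ (0:ℝ), J₁ b = (1/2) * q₁ * b ^ 2
        + ∫ v in Set.Ioi (0:ℝ), (Real.exp (-(b * v)) - 1 + b * v) ∂ν₁)
    (hJ₂ : ∀ b ≥ (0:ℝ), J₂ b = (1/2) * q₂ * b ^ 2
        + ∫ v in Set.Ioi (0:ℝ), (Real.exp (-(b * v)) - 1 + b * v) ∂ν₂)
    (hJ₁ne : ∃ b ≥ (0:ℝ), J₁ b ≠ 0) (hJ₂ne : ∃ b ≥ (0:ℝ), J₂ b ≠ 0)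
    (hreg₁ : ∀ b > (0:ℝ), Tendsto (fun x => J₁ (b * x) / J₁ x)
      (nhdsWithin 0 (Set.Ioi 0)) (nhds (b ^ α₁)))
    (hreg₂ : ∀ b > (0:ℝ), Tendsto (fun x => J₂ (b * x) / J₂ x)
      (nhdsWithin 0 (Set.Ioi 0)) (nhds (b ^ α₂)))
    (hiv₁ : 0 < q₁ ∨ ∫⁻ v in Set.Ioc (0:ℝ) 1, ENNReal.ofReal v ∂ν₁ = ⊤)
    (hiv₂ : 0 < q₂ ∨ ∫⁻ v in Set.Ioc (0:ℝ) 1, ENNReal.ofReal v ∂ν₂ = ⊤)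
    (G₁ G₂ : ℝ → ℝ)
    (hG₁c : ContinuousOn G₁ (Set.Ici 0)) (hG₂c : ContinuousOn G₂ (Set.Ici 0))
    (hG₁nn : ∀ x ≥ (0:ℝ), 0 ≤ G₁ x) (hG₂nn : ∀ x ≥ (0:ℝ), 0 ≤ G₂ x)
    (hG₁pos : ∀ x > (0:ℝ), 0 < G₁ x) (hG₂pos : ∀ x > (0:ℝ), 0 < G₂ x)
    (hratio : ContDiffOn ℝ 1 (fun x => G₂ x / G₁ x) (Set.Ioi 0))
    (η₁ η₂ : ℝ) (hη₁ : 0 < η₁) (hη₂ : 0 < η₂) :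
    (∀ b ≥ (0:ℝ), ∀ x ≥ (0:ℝ),
        J₁ (b * G₁ x) + J₂ (b * G₂ x) = x * (η₁ * b ^ α₁ + η₂ * b ^ α₂)) ↔
      (∃ c₁ > (0:ℝ), ∃ c₂ > (0:ℝ),
        (∀ b ≥ (0:ℝ), J₁ b = c₁ * b ^ α₁ ∧ J₂ b = c₂ * b ^ α₂) ∧
        (∀ x ≥ (0:ℝ), G₁ x = (η₁ * x / c₁) ^ (1 / α₁) ∧
          G₂ x = (η₂ * x / c₂) ^ (1 / α₂))) := by
  constructor
  · intro hfwd
    exact forward_dir α₁ α₂ hα₂ hα₁₂ hα₁ q₁ q₂ hq₁ hq₂ ν₁ ν₂ hν₁ hν₂ J₁ J₂ hJ₁ hJ₂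
      hJ₁ne hJ₂ne hreg₁ hreg₂ hiv₁ hiv₂ G₁ G₂ hG₁c hG₂c hG₁nn hG₂nn hG₁pos hG₂pos
      hratio η₁ η₂ hη₁ hη₂ hfwd
  · intro hyp
    obtain ⟨c₁, hc₁, c₂, hc₂, hJpow, hGform⟩ := hyp
    intro b hb x hx
    have hα₁0 : α₁ ≠ 0 := by intro heq; rw [heq] at hα₁₂; linarith
    have hα₂0 : α₂ ≠ 0 := by intro heq; rw [heq] at hα₂; linarith
    obtain ⟨hG1, hG2⟩ := hGform x hx
    have hG1nn : 0 ≤ G₁ x := by rw [hG1]; positivity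
    have hG2nn : 0 ≤ G₂ x := by rw [hG2]; positivity
    have h1 := (hJpow (b * G₁ x) (mul_nonneg hb hG1nn)).1
    have h2 := (hJpow (b * G₂ x) (mul_nonneg hb hG2nn)).2
    rw [h1, h2, Real.mul_rpow hb hG1nn, Real.mul_rpow hb hG2nn, hG1, hG2]
    rw [one_div, one_div, Real.rpow_inv_rpow (by positivity) hα₁0,
      Real.rpow_inv_rpow (by positivity) hα₂0]
    field_simp
end

section
/- Let d ≥ 1, α ∈ (1, 2), C_α = Γ(2−α)/(α·(α−1)), and let λ be a finite Borel measure on S^{d−1} concentrated on S^{d−1}_+ = { ξ ∈ ℝ^d : |ξ| = 1, ξ_i ≥ 0 for all i }. Define J_ν(z) = ∫_{S^{d−1}} ∫₀^∞ ( e^{−r·⟨z,ξ⟩} − 1 + r·⟨z,ξ⟩ )·r^{−1−α} dr λ(dξ) for z ∈ [0, +∞)^d, and let G : [0, +∞) → [0, +∞)^d satisfy G(0) = 0. Then the following are equivalent: (i) there exists a Borel measure μ on (0, +∞) with ∫₀^∞ (v ∧ v²) μ(dv) < +∞ such that J_ν(b·G(x)) = x·J_μ(b) for all b, x ≥ 0,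 where J_μ(b) = ∫₀^∞ (e^{−bv} − 1 + bv) μ(dv); (ii) there exists C ≥ 0 such that ∫_{S^{d−1}} ⟨G(x), ξ⟩^α λ(dξ) = (C/C_α)·x for all x ≥ 0. Moreover, in that case J_μ(b) = C·b^α for all b ≥ 0. -/
open Real Set MeasureTheory Filter

lemma stmt18_exp_nonneg (t : ℝ) : 0 ≤ Real.exp (-t) - 1 + t := by
  have := Real.add_one_le_exp (-t); linarith

lemma stmt18_exp_le_sq {t : ℝ} (ht : 0 ≤ t) : Real.exp (-t) - 1 + t ≤ t ^ 2 / 2 := by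
  set f : ℝ → ℝ := fun u => u ^ 2 / 2 - u + 1 - Real.exp (-u) with hf
  have hder : ∀ u : ℝ, HasDerivAt f (u - 1 + Real.exp (-u)) u := by
    intro u
    have h1 : HasDerivAt (fun u : ℝ => Real.exp (-u)) (Real.exp (-u) * (-1)) u :=
      ((hasDerivAt_id u).neg).exp
    have h2 : HasDerivAt (fun u : ℝ => u ^ 2 / 2 - u + 1) (u - 1) u := by
      have : HasDerivAt (fun u : ℝ => u ^ 2) (2 * u) u := by
        simpa using (hasDerivAt_pow 2 u)
      have := ((this.div_const 2).sub (hasDerivAt_id u)).add_const 1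
      exact this.congr_deriv (by ring)
    have := h2.sub h1
    exact this.congr_deriv (by ring)
  have hmono : MonotoneOn f (Set.Ici 0) := by
    apply monotoneOn_of_deriv_nonneg (convex_Ici 0)
    · exact (Continuous.continuousOn (by continuity))
    · intro u hu
      exact (hder u).differentiableAt.differentiableWithinAt
    · intro u hu
      rw [(hder u).deriv]
      have := Real.add_one_le_exp (-u); linarith
  have h0 : f 0 = 0 := by simp [hf]
  have := hmono (Set.self_mem_Ici) ht ht
  rw [h0] at this
  simp only [hf] at this
  linarith

lemma stmt18_exp_le_lin {t : ℝ} (ht : 0 ≤ t) : Real.exp (-t) - 1 + t ≤ t := by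
  have : Real.exp (-t) ≤ 1 := Real.exp_le_one_iff.mpr (by linarith)
  linarith

lemma stmt18_one_sub_exp_nonneg {t : ℝ} (ht : 0 ≤ t) : 0 ≤ 1 - Real.exp (-t) := by
  have : Real.exp (-t) ≤ 1 := Real.exp_le_one_iff.mpr (by linarith)
  linarith

lemma stmt18_one_sub_exp_le (t : ℝ) : 1 - Real.exp (-t) ≤ t := by
  have := Real.add_one_le_exp (-t); linarith

section key
variable {α c : ℝ}

lemma stmt18_gamma_part_integrable (hα : α ∈ Set.Ioo (1:ℝ) 2) (hc : 0 < c) :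
    IntegrableOn (fun r : ℝ => Real.exp (-(c*r)) * r ^ (1-α)) (Set.Ioi 0) := by
  have h := integrableOn_rpow_mul_exp_neg_mul_rpow
    (by linarith [hα.2] : (-1:ℝ) < 1 - α) (zero_lt_one : (0:ℝ) < 1) hc
  refine (h.congr_fun (fun x hx => ?_) measurableSet_Ioi)
  simp only [Real.rpow_one]
  ring_nf

lemma stmt18_gamma_part_integral (hα : α ∈ Set.Ioo (1:ℝ) 2) (hc : 0 < c) :
    ∫ r in Set.Ioi (0:ℝ), Real.exp (-(c*r)) * r ^ (1-α)
      = c ^ (α - 2) * Real.Gamma (2 - α) := by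
  have h := Real.integral_rpow_mul_exp_neg_mul_Ioi
    (by linarith [hα.2] : (0:ℝ) < 2 - α) hc
  have h2 : ∫ r in Set.Ioi (0:ℝ), Real.exp (-(c*r)) * r ^ (1-α)
      = ∫ t in Set.Ioi (0:ℝ), t ^ (2 - α - 1) * Real.exp (-(c*t)) := by
    refine setIntegral_congr_fun measurableSet_Ioi (fun x hx => ?_)
    rw [show (2 - α - 1 : ℝ) = 1 - α by ring]
    ring
  rw [h2, h, one_div, Real.inv_rpow hc.le, ← Real.rpow_neg hc.le]
  rw [show (-(2-α) : ℝ) = α - 2 by ring]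


lemma stmt18_aux_integrable {α : ℝ} (hα : α ∈ Set.Ioo (1:ℝ) 2) {f : ℝ → ℝ}
    (hm : AEStronglyMeasurable f (volume.restrict (Set.Ioi 0))) {K : ℝ}
    (h0 : ∀ r ∈ Set.Ioi (0:ℝ), 0 ≤ f r)
    (h1 : ∀ r ∈ Set.Ioc (0:ℝ) 1, f r ≤ K * r ^ 2)
    (h2 : ∀ r ∈ Set.Ioi (1:ℝ), f r ≤ K * r) :
    IntegrableOn (fun r => f r * r ^ (-1 - α)) (Set.Ioi (0:ℝ)) := by
  obtain ⟨hα1, hα2⟩ := hα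
  have hmr : AEStronglyMeasurable (fun r => f r * r ^ (-1 - α))
      (volume.restrict (Set.Ioi (0:ℝ))) := by
    refine hm.mul ?_
    exact (Measurable.aestronglyMeasurable (by measurability))
  rw [← Set.Ioc_union_Ioi_eq_Ioi (zero_le_one : (0:ℝ) ≤ 1)]
  refine MeasureTheory.IntegrableOn.union ?_ ?_
  · have hint : IntegrableOn (fun r : ℝ => K * r ^ (1 - α)) (Set.Ioc (0:ℝ) 1) := by
      refine Integrable.const_mul ?_ K
      exact (intervalIntegrable_iff_integrableOn_Ioc_of_le zero_le_one).mp
        (intervalIntegral.intervalIntegrable_rpow' (by linarith))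
    refine Integrable.mono hint (hmr.mono_set Set.Ioc_subset_Ioi_self) ?_
    rw [ae_restrict_iff' measurableSet_Ioc]
    refine Filter.Eventually.of_forall (fun r hr => ?_)
    have hrpos : (0:ℝ) < r := hr.1
    have hfr := h0 r hrpos
    have hrp : (0:ℝ) ≤ r ^ (-1 - α) := Real.rpow_nonneg hrpos.le _
    have hK : 0 ≤ K * r ^ 2 := le_trans hfr (h1 r hr)
    rw [Real.norm_eq_abs, Real.norm_eq_abs, abs_of_nonneg (mul_nonneg hfr hrp)]
    have h2' : r ^ (2:ℕ) * r ^ (-1 - α) = r ^ (1 - α) := by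
      rw [← Real.rpow_natCast r 2, ← Real.rpow_add hrpos]
      congr 1
      push_cast
      ring
    have heq : K * r ^ (1 - α) = K * r ^ 2 * r ^ (-1 - α) := by
      rw [mul_assoc, h2']
    calc f r * r ^ (-1 - α) ≤ K * r ^ 2 * r ^ (-1 - α) :=
          mul_le_mul_of_nonneg_right (h1 r hr) hrp
      _ = K * r ^ (1 - α) := heq.symm
      _ ≤ |K * r ^ (1 - α)| := le_abs_self _
  · have hint : IntegrableOn (fun r : ℝ => K * r ^ (-α)) (Set.Ioi (1:ℝ)) :=
      Integrable.const_mul (integrableOn_Ioi_rpow_of_lt (by linarith) one_pos) K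
    refine Integrable.mono hint (hmr.mono_set (Set.Ioi_subset_Ioi zero_le_one)) ?_
    rw [ae_restrict_iff' measurableSet_Ioi]
    refine Filter.Eventually.of_forall (fun r hr => ?_)
    have hrpos : (0:ℝ) < r := lt_trans zero_lt_one hr
    have hfr := h0 r hrpos
    have hrp : (0:ℝ) ≤ r ^ (-1 - α) := Real.rpow_nonneg hrpos.le _
    rw [Real.norm_eq_abs, Real.norm_eq_abs, abs_of_nonneg (mul_nonneg hfr hrp)]
    have h1' : r * r ^ (-1 - α) = r ^ (-α) := by
      have h := Real.rpow_add hrpos 1 (-1 - α)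
      rw [Real.rpow_one, show (1:ℝ) + (-1 - α) = -α by ring] at h
      exact h.symm
    have heq : K * r ^ (-α) = K * r * r ^ (-1 - α) := by
      rw [mul_assoc, h1']
    calc f r * r ^ (-1 - α) ≤ K * r * r ^ (-1 - α) :=
          mul_le_mul_of_nonneg_right (h2 r hr) hrp
      _ = K * r ^ (-α) := heq.symm
      _ ≤ |K * r ^ (-α)| := le_abs_self _

lemma stmt18_integrand_integrable {α c : ℝ} (hα : α ∈ Set.Ioo (1:ℝ) 2) (hc : 0 ≤ c) :
    IntegrableOn (fun r : ℝ => (Real.exp (-(r*c)) - 1 + r*c) * r ^ (-1-α)) (Set.Ioi 0) := by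
  refine stmt18_aux_integrable hα ?_ (K := c^2/2 + c) ?_ ?_ ?_
  · exact (Continuous.aestronglyMeasurable (by continuity))
  · intro r _; exact stmt18_exp_nonneg (r*c)
  · intro r hr
    have h1 : Real.exp (-(r*c)) - 1 + r*c ≤ (r*c)^2/2 :=
      stmt18_exp_le_sq (mul_nonneg hr.1.le hc)
    have h2 : (r*c)^2/2 ≤ (c^2/2 + c) * r^2 := by nlinarith [hr.1.le, sq_nonneg r]
    linarith
  · intro r hr
    have hr0 : (0:ℝ) ≤ r := le_trans zero_le_one hr.le
    have h1 : Real.exp (-(r*c)) - 1 + r*c ≤ r*c := stmt18_exp_le_lin (mul_nonneg hr0 hc)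
    have h2 : r*c ≤ (c^2/2 + c) * r := by nlinarith [sq_nonneg c]
    linarith


lemma stmt18_key_integral {α c : ℝ} (hα : α ∈ Set.Ioo (1:ℝ) 2) (hc : 0 ≤ c) :
    ∫ r in Set.Ioi (0:ℝ), (Real.exp (-(r*c)) - 1 + r*c) * r ^ (-1-α)
      = (Real.Gamma (2-α) / (α * (α-1))) * c ^ α := by
  obtain ⟨hα1, hα2⟩ := hα
  have hαpos : (0:ℝ) < α := by linarith
  have hA : (0:ℝ) < α * (α - 1) := mul_pos hαpos (by linarith)
  rcases eq_or_lt_of_le hc with rfl | hcpos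
  · simp [Real.zero_rpow (ne_of_gt hαpos)]
  set A := α * (α - 1) with hAdef
  set F : ℝ → ℝ := fun r =>
    -((Real.exp (-(c*r)) - 1 + c*r) * r ^ (-α)) / α
      - c * ((1 - Real.exp (-(c*r))) * r ^ (1-α)) / A with hF
  set g : ℝ → ℝ := fun r => (Real.exp (-(r*c)) - 1 + r*c) * r ^ (-1-α) with hg
  set h : ℝ → ℝ := fun r => c^2 * (Real.exp (-(c*r)) * r ^ (1-α)) / A with hh
  -- derivative
  have hderiv : ∀ r ∈ Set.Ioi (0:ℝ), HasDerivAt F (g r - h r) r := by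
    intro r hr
    have hrpos : (0:ℝ) < r := hr
    have he : HasDerivAt (fun r : ℝ => Real.exp (-(c*r)))
        (Real.exp (-(c*r)) * (-(c*1))) r :=
      (((hasDerivAt_id r).const_mul c).neg).exp
    have hu : HasDerivAt (fun r : ℝ => Real.exp (-(c*r)) - 1 + c*r)
        (Real.exp (-(c*r)) * (-(c*1)) + c*1) r :=
      (he.sub_const 1).add ((hasDerivAt_id r).const_mul c)
    have hp1 : HasDerivAt (fun r : ℝ => r ^ (-α)) (-α * r ^ (-α-1)) r :=
      Real.hasDerivAt_rpow_const (Or.inl hrpos.ne')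
    have hw : HasDerivAt (fun r : ℝ => 1 - Real.exp (-(c*r)))
        (-(Real.exp (-(c*r)) * (-(c*1)))) r := he.const_sub 1
    have hp2 : HasDerivAt (fun r : ℝ => r ^ (1-α)) ((1-α) * r ^ (1-α-1)) r :=
      Real.hasDerivAt_rpow_const (Or.inl hrpos.ne')
    have hD : HasDerivAt F
        (-((Real.exp (-(c*r)) * (-(c*1)) + c*1) * r ^ (-α)
            + (Real.exp (-(c*r)) - 1 + c*r) * (-α * r ^ (-α-1))) / α
          - c * ((-(Real.exp (-(c*r)) * (-(c*1)))) * r ^ (1-α)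
            + (1 - Real.exp (-(c*r))) * ((1-α) * r ^ (1-α-1))) / A) r :=
      (((hu.mul hp1).neg).div_const α).sub (((hw.mul hp2).const_mul c).div_const A)
    convert hD using 1
    have hx1 : r ^ (-α) = r ^ (-α-1) * r := by
      rw [← Real.rpow_add_one hrpos.ne' (-α-1)]; ring_nf
    have hx2 : r ^ (1-α) = r ^ (-α-1) * r * r := by
      rw [← hx1, ← Real.rpow_add_one hrpos.ne' (-α)]; ring_nf
    have hx3 : r ^ (1-α-1) = r ^ (-α-1) * r := by
      rw [← hx1]; congr 1; ring
    have hx4 : r ^ (-1-α) = r ^ (-α-1) := by congr 1; ring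
    simp only [hg, hh, hx1, hx2, hx3, hx4]
    field_simp
    ring
  have hF0 : F 0 = 0 := by
    simp [hF]
  -- bound near 0 (valid on all of Ici 0)
  have hbound0 : ∀ r ∈ Set.Ici (0:ℝ),
      ‖F r‖ ≤ (c^2/(2*α) + c^2/A) * r ^ (2-α) := by
    intro r hr
    rcases eq_or_lt_of_le (Set.mem_Ici.mp hr) with rfl | hrpos
    · rw [hF0, Real.zero_rpow (show (2-α) ≠ 0 by intro h'; rw [sub_eq_zero] at h'; linarith)]
      simp
    · have hcr : (0:ℝ) ≤ c * r := mul_nonneg hc hrpos.le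
      have hE0 := stmt18_exp_nonneg (c*r)
      have hEq := stmt18_exp_le_sq hcr
      have hW0 := stmt18_one_sub_exp_nonneg hcr
      have hW1 := stmt18_one_sub_exp_le (c*r)
      have hrp : (0:ℝ) ≤ r ^ (-α) := Real.rpow_nonneg hrpos.le _
      have hrp2 : (0:ℝ) ≤ r ^ (1-α) := Real.rpow_nonneg hrpos.le _
      have hy1 : r ^ (-α) * r * r = r ^ (2-α) := by
        rw [← Real.rpow_add_one hrpos.ne' (-α), ← Real.rpow_add_one hrpos.ne']
        congr 1; ring
      have hy2 : r ^ (1-α) * r = r ^ (2-α) := by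
        rw [← Real.rpow_add_one hrpos.ne' (1-α)]
        congr 1; ring
      have ht1 : ((Real.exp (-(c*r)) - 1 + c*r) * r ^ (-α)) / α
          ≤ (c^2/(2*α)) * r ^ (2-α) := by
        have : ((Real.exp (-(c*r)) - 1 + c*r) * r ^ (-α)) / α
            ≤ (((c*r)^2/2) * r ^ (-α)) / α := by gcongr
        refine this.trans (le_of_eq ?_)
        rw [← hy1]; field_simp
      have ht2 : c * ((1 - Real.exp (-(c*r))) * r ^ (1-α)) / A
          ≤ (c^2/A) * r ^ (2-α) := by
        have : c * ((1 - Real.exp (-(c*r))) * r ^ (1-α)) / A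
            ≤ c * ((c*r) * r ^ (1-α)) / A := by gcongr
        refine this.trans (le_of_eq ?_)
        rw [← hy2]; field_simp
      have hn1 : 0 ≤ ((Real.exp (-(c*r)) - 1 + c*r) * r ^ (-α)) / α :=
        div_nonneg (mul_nonneg hE0 hrp) hαpos.le
      have hn2 : 0 ≤ c * ((1 - Real.exp (-(c*r))) * r ^ (1-α)) / A :=
        div_nonneg (mul_nonneg hcpos.le (mul_nonneg hW0 hrp2)) hA.le
      have habs : ‖F r‖ = ((Real.exp (-(c*r)) - 1 + c*r) * r ^ (-α)) / α
          + c * ((1 - Real.exp (-(c*r))) * r ^ (1-α)) / A := by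
        have hFr : F r = -(((Real.exp (-(c*r)) - 1 + c*r) * r ^ (-α)) / α
            + c * ((1 - Real.exp (-(c*r))) * r ^ (1-α)) / A) := by
          simp only [hF]; ring
        rw [Real.norm_eq_abs, hFr, abs_neg, abs_of_nonneg (by linarith)]
      rw [habs]
      nlinarith [ht1, ht2]
  -- bound at infinity (valid for r > 0)
  have hboundtop : ∀ r ∈ Set.Ioi (0:ℝ),
      ‖F r‖ ≤ (c/α + c/A) * r ^ (1-α) := by
    intro r hrpos
    have hrpos : (0:ℝ) < r := hrpos
    have hcr : (0:ℝ) ≤ c * r := mul_nonneg hc hrpos.le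
    have hE0 := stmt18_exp_nonneg (c*r)
    have hEl := stmt18_exp_le_lin hcr
    have hW0 := stmt18_one_sub_exp_nonneg hcr
    have hWb : 1 - Real.exp (-(c*r)) ≤ 1 := by
      have := Real.exp_pos (-(c*r)); linarith
    have hrp : (0:ℝ) ≤ r ^ (-α) := Real.rpow_nonneg hrpos.le _
    have hrp2 : (0:ℝ) ≤ r ^ (1-α) := Real.rpow_nonneg hrpos.le _
    have hy1 : r ^ (-α) * r = r ^ (1-α) := by
      rw [← Real.rpow_add_one hrpos.ne' (-α)]
      congr 1; ring
    have ht1 : ((Real.exp (-(c*r)) - 1 + c*r) * r ^ (-α)) / α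
        ≤ (c/α) * r ^ (1-α) := by
      have : ((Real.exp (-(c*r)) - 1 + c*r) * r ^ (-α)) / α
          ≤ ((c*r) * r ^ (-α)) / α := by gcongr
      refine this.trans (le_of_eq ?_)
      rw [← hy1]; field_simp
    have ht2 : c * ((1 - Real.exp (-(c*r))) * r ^ (1-α)) / A
        ≤ (c/A) * r ^ (1-α) := by
      have : c * ((1 - Real.exp (-(c*r))) * r ^ (1-α)) / A
          ≤ c * (1 * r ^ (1-α)) / A := by gcongr
      refine this.trans (le_of_eq ?_)
      field_simp
    have hn1 : 0 ≤ ((Real.exp (-(c*r)) - 1 + c*r) * r ^ (-α)) / α :=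
      div_nonneg (mul_nonneg hE0 hrp) hαpos.le
    have hn2 : 0 ≤ c * ((1 - Real.exp (-(c*r))) * r ^ (1-α)) / A :=
      div_nonneg (mul_nonneg hcpos.le (mul_nonneg hW0 hrp2)) hA.le
    have habs : ‖F r‖ = ((Real.exp (-(c*r)) - 1 + c*r) * r ^ (-α)) / α
        + c * ((1 - Real.exp (-(c*r))) * r ^ (1-α)) / A := by
      have hFr : F r = -(((Real.exp (-(c*r)) - 1 + c*r) * r ^ (-α)) / α
          + c * ((1 - Real.exp (-(c*r))) * r ^ (1-α)) / A) := by
        simp only [hF]; ring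
      rw [Real.norm_eq_abs, hFr, abs_neg, abs_of_nonneg (by linarith)]
    rw [habs]
    nlinarith [ht1, ht2]
  have hcont : ContinuousWithinAt F (Set.Ici 0) 0 := by
    rw [ContinuousWithinAt, hF0]
    apply squeeze_zero_norm'
    · filter_upwards [self_mem_nhdsWithin] with r hr using hbound0 r hr
    · have hct : ContinuousAt (fun r : ℝ => r ^ (2-α)) 0 :=
        Real.continuousAt_rpow_const 0 (2-α) (Or.inr (by linarith))
      have h0' : (0:ℝ) ^ (2-α) = 0 := Real.zero_rpow (by intro h'; rw [sub_eq_zero] at h'; linarith)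
      have h1 : Filter.Tendsto (fun r : ℝ => r ^ (2-α)) (nhdsWithin 0 (Set.Ici 0))
          (nhds ((0:ℝ) ^ (2-α))) :=
        hct.tendsto.mono_left nhdsWithin_le_nhds
      have h2 := h1.const_mul (c^2/(2*α) + c^2/A)
      rw [h0', mul_zero] at h2
      exact h2
  have htop : Filter.Tendsto F Filter.atTop (nhds 0) := by
    apply squeeze_zero_norm'
    · filter_upwards [Filter.eventually_gt_atTop 0] with r hr using hboundtop r hr
    · have hrt : Filter.Tendsto (fun r : ℝ => r ^ (1-α)) Filter.atTop (nhds 0) := by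
        have := tendsto_rpow_neg_atTop (show (0:ℝ) < α - 1 by linarith)
        convert this using 2 with r
        · ring_nf
      have := hrt.const_mul (c/α + c/A)
      rw [mul_zero] at this
      exact this
  have hgint : IntegrableOn g (Set.Ioi (0:ℝ)) :=
    stmt18_integrand_integrable ⟨hα1, hα2⟩ hc
  have hhint : IntegrableOn h (Set.Ioi (0:ℝ)) := by
    have := ((stmt18_gamma_part_integrable ⟨hα1,hα2⟩ hcpos).const_mul (c^2)).div_const A
    exact this
  have hint : IntegrableOn (fun r => g r - h r) (Set.Ioi (0:ℝ)) := hgint.sub hhint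
  have h0int := integral_Ioi_of_hasDerivAt_of_tendsto hcont hderiv hint htop
  rw [hF0, sub_zero] at h0int
  have hsub := integral_sub hgint hhint
  rw [h0int] at hsub
  have hgeq : ∫ r in Set.Ioi (0:ℝ), g r = ∫ r in Set.Ioi (0:ℝ), h r := by linarith
  have hIh : ∫ r in Set.Ioi (0:ℝ), h r = c^2 * (c^(α-2) * Real.Gamma (2-α)) / A := by
    simp only [hh]
    rw [integral_div, integral_const_mul, stmt18_gamma_part_integral ⟨hα1,hα2⟩ hcpos]
  rw [hg] at hgeq
  rw [hgeq, hIh]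
  have hc2 : c^2 * c^(α-2) = c^α := by
    rw [← Real.rpow_natCast c 2, ← Real.rpow_add hcpos]
    congr 1; push_cast; ring
  field_simp
  nlinarith [hc2, Real.Gamma_pos_of_pos (show (0:ℝ) < 2 - α by linarith)]

lemma stmt18_minfn_meas : Measurable fun v : ℝ => ENNReal.ofReal (min v (v^2)) := by
  measurability

lemma stmt18_rpow_meas (α : ℝ) : Measurable fun v : ℝ => v ^ (-1-α) := by
  measurability

lemma stmt18_min_integrable {α : ℝ} (hα : α ∈ Set.Ioo (1:ℝ) 2) :
    IntegrableOn (fun v : ℝ => min v (v^2) * v ^ (-1-α)) (Set.Ioi 0) := by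
  refine stmt18_aux_integrable hα ?_ (K := 1) ?_ ?_ ?_
  · exact (Continuous.aestronglyMeasurable (by continuity))
  · intro v hv
    exact le_min hv.le (by positivity)
  · intro v hv
    rw [one_mul]; exact min_le_right _ _
  · intro v hv
    rw [one_mul]; exact min_le_left _ _

/-- For an `α`-stable spherical Lévy exponent `J_ν` whose spherical measure is
concentrated on the positive-orthant part of the unit sphere, and `G ≥ 0` with
`G(0) = 0`: there is a measure `μ` with `∫ (v ∧ v²) μ(dv) < ∞` and
`J_ν(bG(x)) = x·J_μ(b)` iff `∫ ⟨G(x),ξ⟩^α λ(dξ) = (C/C_α)·x` for some `C ≥ 0`;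
moreover, in that case `J_μ(b) = C·b^α`. -/
theorem stmt18 (d : ℕ) (hd : 1 ≤ d) (α : ℝ) (hα : α ∈ Set.Ioo (1:ℝ) 2)
    (lam : Measure (EuclideanSpace ℝ (Fin d))) [IsFiniteMeasure lam]
    (hsph : lam {ξ : EuclideanSpace ℝ (Fin d) | ‖ξ‖ = 1 ∧ ∀ i, 0 ≤ ξ i}ᶜ = 0)
    (Jν : EuclideanSpace ℝ (Fin d) → ℝ)
    (hJν : ∀ z : EuclideanSpace ℝ (Fin d), (∀ i, 0 ≤ z i) →
      Jν z = ∫ ξ, (∫ r in Set.Ioi (0:ℝ),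
        (Real.exp (-(r * (inner ℝ z ξ : ℝ))) - 1 + r * (inner ℝ z ξ : ℝ))
          * r ^ (-1 - α)) ∂lam)
    (G : ℝ → EuclideanSpace ℝ (Fin d))
    (hGnn : ∀ x ≥ (0:ℝ), ∀ i, 0 ≤ G x i)
    (hG0 : G 0 = 0) :
    ((∃ μ : Measure ℝ,
        (∫⁻ v in Set.Ioi (0:ℝ), ENNReal.ofReal (min v (v ^ 2)) ∂μ < ⊤) ∧
        ∀ b ≥ (0:ℝ), ∀ x ≥ (0:ℝ),
          Jν (b • G x)
            = x * ∫ v in Set.Ioi (0:ℝ), (Real.exp (-(b * v)) - 1 + b * v) ∂μ) ↔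
      (∃ C ≥ (0:ℝ), ∀ x ≥ (0:ℝ),
        (∫ ξ, (inner ℝ (G x) ξ : ℝ) ^ α ∂lam)
          = (C / (Real.Gamma (2 - α) / (α * (α - 1)))) * x)) ∧
    (∀ μ : Measure ℝ,
      (∫⁻ v in Set.Ioi (0:ℝ), ENNReal.ofReal (min v (v ^ 2)) ∂μ < ⊤) →
      (∀ b ≥ (0:ℝ), ∀ x ≥ (0:ℝ),
        Jν (b • G x)
          = x * ∫ v in Set.Ioi (0:ℝ), (Real.exp (-(b * v)) - 1 + b * v) ∂μ) →
      ∃ C ≥ (0:ℝ),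
        (∀ x ≥ (0:ℝ),
          (∫ ξ, (inner ℝ (G x) ξ : ℝ) ^ α ∂lam)
            = (C / (Real.Gamma (2 - α) / (α * (α - 1)))) * x) ∧
        ∀ b ≥ (0:ℝ),
          (∫ v in Set.Ioi (0:ℝ), (Real.exp (-(b * v)) - 1 + b * v) ∂μ)
            = C * b ^ α) := by
  obtain ⟨hα1, hα2⟩ := hα
  set Cα := Real.Gamma (2 - α) / (α * (α - 1)) with hCαdef
  have hCα : 0 < Cα :=
    div_pos (Real.Gamma_pos_of_pos (by linarith)) (by nlinarith)
  have hae : ∀ᵐ ξ ∂lam, ‖ξ‖ = 1 ∧ ∀ i, 0 ≤ ξ i := by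
    rw [MeasureTheory.ae_iff]
    exact hsph
  have JF : ∀ z : EuclideanSpace ℝ (Fin d), (∀ i, 0 ≤ z i) →
      Jν z = Cα * ∫ ξ, (inner ℝ z ξ : ℝ) ^ α ∂lam := by
    intro z hz
    rw [hJν z hz, ← integral_const_mul]
    refine integral_congr_ae ?_
    filter_upwards [hae] with ξ hξ
    have hin : 0 ≤ (inner ℝ z ξ : ℝ) := by
      rw [PiLp.inner_apply]
      exact Finset.sum_nonneg fun i _ =>
        mul_nonneg (by simpa using hξ.2 i) (by simpa using hz i)
    exact stmt18_key_integral ⟨hα1, hα2⟩ hin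
  have hinnerG : ∀ x ≥ (0:ℝ), ∀ᵐ ξ ∂lam, 0 ≤ (inner ℝ (G x) ξ : ℝ) := by
    intro x hx
    filter_upwards [hae] with ξ hξ
    rw [PiLp.inner_apply]
    exact Finset.sum_nonneg fun i _ =>
      mul_nonneg (by simpa using hξ.2 i) (by simpa using hGnn x hx i)
  have SC : ∀ b ≥ (0:ℝ), ∀ x ≥ (0:ℝ),
      (∫ ξ, (inner ℝ (b • G x) ξ : ℝ) ^ α ∂lam)
        = b ^ α * ∫ ξ, (inner ℝ (G x) ξ : ℝ) ^ α ∂lam := by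
    intro b hb x hx
    rw [← integral_const_mul]
    refine integral_congr_ae ?_
    filter_upwards [hinnerG x hx] with ξ hξ
    rw [real_inner_smul_left, Real.mul_rpow hb hξ]
  have coordsmul : ∀ b ≥ (0:ℝ), ∀ x ≥ (0:ℝ), ∀ i, 0 ≤ (b • G x) i :=
    fun b hb x hx i => mul_nonneg hb (hGnn x hx i)
  have M3 : ∀ μ : Measure ℝ,
      (∫⁻ v in Set.Ioi (0:ℝ), ENNReal.ofReal (min v (v ^ 2)) ∂μ < ⊤) →
      (∀ b ≥ (0:ℝ), ∀ x ≥ (0:ℝ),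
        Jν (b • G x)
          = x * ∫ v in Set.Ioi (0:ℝ), (Real.exp (-(b * v)) - 1 + b * v) ∂μ) →
      ∃ C ≥ (0:ℝ),
        (∀ x ≥ (0:ℝ),
          (∫ ξ, (inner ℝ (G x) ξ : ℝ) ^ α ∂lam) = (C / Cα) * x) ∧
        ∀ b ≥ (0:ℝ),
          (∫ v in Set.Ioi (0:ℝ), (Real.exp (-(b * v)) - 1 + b * v) ∂μ)
            = C * b ^ α := by
    intro μ hfin heq
    set C := ∫ v in Set.Ioi (0:ℝ), (Real.exp (-(1 * v)) - 1 + 1 * v) ∂μ with hCdef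
    have hC0 : 0 ≤ C :=
      integral_nonneg fun v => stmt18_exp_nonneg (1 * v)
    have hii : ∀ x ≥ (0:ℝ),
        (∫ ξ, (inner ℝ (G x) ξ : ℝ) ^ α ∂lam) = (C / Cα) * x := by
      intro x hx
      have h1 := heq 1 zero_le_one x hx
      rw [one_smul, JF (G x) (hGnn x hx), ← hCdef] at h1
      have h2 : Cα * ((C / Cα) * x) = x * C := by field_simp
      exact mul_left_cancel₀ hCα.ne' (h1.trans h2.symm)
    refine ⟨C, hC0, hii, ?_⟩
    intro b hb
    have h1 := heq b hb 1 zero_le_one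
    rw [JF _ (coordsmul b hb 1 zero_le_one), SC b hb 1 zero_le_one,
      hii 1 zero_le_one, one_mul] at h1
    rw [← h1]; field_simp
  have M4 : (∃ C ≥ (0:ℝ), ∀ x ≥ (0:ℝ),
        (∫ ξ, (inner ℝ (G x) ξ : ℝ) ^ α ∂lam) = (C / Cα) * x) →
      (∃ μ : Measure ℝ,
        (∫⁻ v in Set.Ioi (0:ℝ), ENNReal.ofReal (min v (v ^ 2)) ∂μ < ⊤) ∧
        ∀ b ≥ (0:ℝ), ∀ x ≥ (0:ℝ),
          Jν (b • G x)
            = x * ∫ v in Set.Ioi (0:ℝ), (Real.exp (-(b * v)) - 1 + b * v) ∂μ) := by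
    rintro ⟨C, hC0, hC⟩
    set dens : ℝ → NNReal := fun v => Real.toNNReal (C / Cα * v ^ (-1-α)) with hdens
    have hdensmeas : Measurable dens := by
      apply Measurable.real_toNNReal
      exact ((stmt18_rpow_meas α).const_mul _)
    have hres : ((((volume : Measure ℝ).restrict (Set.Ioi (0:ℝ))).withDensity
          (fun v => (dens v : ENNReal))).restrict (Set.Ioi (0:ℝ)))
        = ((volume : Measure ℝ).restrict (Set.Ioi (0:ℝ))).withDensity
          (fun v => (dens v : ENNReal)) := by
      rw [MeasureTheory.restrict_withDensity measurableSet_Ioi,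
        Measure.restrict_restrict measurableSet_Ioi, Set.inter_self]
    refine ⟨((volume : Measure ℝ).restrict (Set.Ioi (0:ℝ))).withDensity
      (fun v => (dens v : ENNReal)), ?_, ?_⟩
    · rw [hres, lintegral_withDensity_eq_lintegral_mul _ hdensmeas.coe_nnreal_ennreal
        stmt18_minfn_meas]
      have hcongr : ∀ᵐ v ∂((volume : Measure ℝ).restrict (Set.Ioi (0:ℝ))),
          ((fun v => (dens v : ENNReal)) * fun v => ENNReal.ofReal (min v (v^2))) v
            = ENNReal.ofReal (C/Cα * (min v (v^2) * v ^ (-1-α))) := by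
        rw [ae_restrict_iff' measurableSet_Ioi]
        refine Filter.Eventually.of_forall (fun v hv => ?_)
        have hd0 : 0 ≤ C/Cα * v ^ (-1-α) :=
          mul_nonneg (div_nonneg hC0 hCα.le) (Real.rpow_nonneg (le_of_lt hv) _)
        simp only [Pi.mul_apply, hdens]
        rw [show ((Real.toNNReal (C/Cα * v ^ (-1-α)) : NNReal) : ENNReal)
            = ENNReal.ofReal (C/Cα * v ^ (-1-α)) from rfl]
        rw [← ENNReal.ofReal_mul hd0]
        congr 1; ring
      rw [lintegral_congr_ae hcongr]
      exact ((stmt18_min_integrable ⟨hα1, hα2⟩).const_mul (C/Cα)).lintegral_lt_top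
    · intro b hb x hx
      have hIb : (∫ v in Set.Ioi (0:ℝ), (Real.exp (-(b*v)) - 1 + b*v)
            ∂(((volume : Measure ℝ).restrict (Set.Ioi (0:ℝ))).withDensity
              (fun v => (dens v : ENNReal)))) = C * b ^ α := by
        rw [hres, integral_withDensity_eq_integral_smul hdensmeas]
        have hcongr : ∀ᵐ v ∂((volume : Measure ℝ).restrict (Set.Ioi (0:ℝ))),
            dens v • (Real.exp (-(b*v)) - 1 + b*v)
              = (C/Cα) * ((Real.exp (-(v*b)) - 1 + v*b) * v ^ (-1-α)) := by
          rw [ae_restrict_iff' measurableSet_Ioi]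
          refine Filter.Eventually.of_forall (fun v hv => ?_)
          have hd0 : 0 ≤ C/Cα * v ^ (-1-α) :=
            mul_nonneg (div_nonneg hC0 hCα.le) (Real.rpow_nonneg (le_of_lt hv) _)
          simp only [hdens]
          rw [NNReal.smul_def, Real.coe_toNNReal _ hd0, smul_eq_mul, mul_comm v b]
          ring
        rw [integral_congr_ae hcongr, integral_const_mul,
          stmt18_key_integral ⟨hα1, hα2⟩ hb, ← hCαdef]
        field_simp
      rw [hIb, JF _ (coordsmul b hb x hx), SC b hb x hx, hC x hx]
      field_simp
  refine ⟨⟨?_, M4⟩, M3⟩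
  rintro ⟨μ, hfin, heq⟩
  obtain ⟨C, hC0, hii, _⟩ := M3 μ hfin heq
  exact ⟨C, hC0, hii⟩
end key
end

section
/- Let Q be a symmetric positive semidefinite real d×d matrix, α ∈ (1, 2), c ≥ 0, and let G : (0, +∞) → ℝ^d \ {0} be such that lim_{x→0+} |G(x)| = 0, the limit G₀ = lim_{x→0+} G(x)/|G(x)| exists, and lim_{x→0+} x / |G(x)|^α = L for some L ∈ (0, +∞). If (1/2)·⟨Q·G(x), G(x)⟩ = c·x for every x > 0, then c = 0. -/
open Real Filter Set Matrix

/-- If `Q` is symmetric positive semidefinite, `|G(x)| → 0` as `x → 0+`,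
`G(x)/|G(x)| → G₀`, `x/|G(x)|^α → L ∈ (0,∞)` for some `α ∈ (1,2)`, and
`(1/2)⟨QG(x), G(x)⟩ = c·x` for all `x > 0` with `c ≥ 0`, then `c = 0`. -/
theorem stmt19 (d : ℕ) (Q : Matrix (Fin d) (Fin d) ℝ) (hQ : Q.PosSemidef)
    (α : ℝ) (hα : α ∈ Set.Ioo (1:ℝ) 2) (c : ℝ) (hc : 0 ≤ c)
    (G : ℝ → EuclideanSpace ℝ (Fin d))
    (hGne : ∀ x > (0:ℝ), G x ≠ 0)
    (hnorm0 : Tendsto (fun x => ‖G x‖) (nhdsWithin 0 (Set.Ioi 0)) (nhds 0))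
    (G₀ : EuclideanSpace ℝ (Fin d))
    (hG₀ : Tendsto (fun x => (‖G x‖)⁻¹ • G x) (nhdsWithin 0 (Set.Ioi 0)) (nhds G₀))
    (L : ℝ) (hL : 0 < L)
    (hxG : Tendsto (fun x => x / ‖G x‖ ^ α) (nhdsWithin 0 (Set.Ioi 0)) (nhds L))
    (hlin : ∀ x > (0:ℝ), (1/2) * (Q.mulVec (G x) ⬝ᵥ (G x)) = c * x) :
    c = 0 := by
  by_contra hc0
  have hcpos : 0 < c := lt_of_le_of_ne hc (Ne.symm hc0)
  set l := nhdsWithin (0:ℝ) (Set.Ioi 0) with hl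
  have hxpos : ∀ᶠ x in l, 0 < x := eventually_mem_nhdsWithin
  have hGpos : ∀ᶠ x in l, 0 < ‖G x‖ := by
    filter_upwards [hxpos] with x hx
    exact norm_pos_iff.mpr (hGne x hx)
  -- ‖G x‖ ^ (α - 2) → ∞
  have hnorm0' : Tendsto (fun x => ‖G x‖) l (nhdsWithin 0 (Set.Ioi 0)) :=
    tendsto_nhdsWithin_iff.mpr ⟨hnorm0, hGpos⟩
  have hinv : Tendsto (fun x => (‖G x‖)⁻¹) l atTop :=
    tendsto_inv_nhdsGT_zero.comp hnorm0'
  have h1 : Tendsto (fun x => ‖G x‖ ^ (α - 2)) l atTop := by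
    have h2α : 0 < 2 - α := by linarith [hα.2]
    have := (tendsto_rpow_atTop h2α).comp hinv
    refine this.congr' ?_
    filter_upwards [hGpos] with x hx
    simp only [Function.comp]
    rw [← Real.rpow_neg_one ‖G x‖, ← Real.rpow_mul hx.le]
    norm_num
  -- x / ‖G x‖ ^ 2 → ∞
  have h2 : Tendsto (fun x => x / ‖G x‖ ^ (2:ℝ)) l atTop := by
    have := hxG.pos_mul_atTop hL h1
    refine this.congr' ?_
    filter_upwards [hGpos] with x hx
    rw [div_mul_eq_mul_div, mul_div_assoc, ← Real.rpow_sub hx]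
    norm_num
    norm_num [Real.rpow_two, div_eq_mul_inv]
  -- the quadratic form is continuous
  have hf : Continuous (fun v : EuclideanSpace ℝ (Fin d) => Q.mulVec v ⬝ᵥ v) := by
    simp only [dotProduct, Matrix.mulVec]
    refine continuous_finset_sum _ fun i _ => ?_
    refine Continuous.mul (continuous_finset_sum _ fun j _ => ?_)
      ((EuclideanSpace.proj i).continuous)
    exact continuous_const.mul ((EuclideanSpace.proj j).continuous)
  have hcomp : Tendsto (fun x => Q.mulVec ((‖G x‖)⁻¹ • G x) ⬝ᵥ ((‖G x‖)⁻¹ • G x)) l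
      (nhds (Q.mulVec G₀ ⬝ᵥ G₀)) := (hf.tendsto G₀).comp hG₀
  -- but this function equals 2 c x / ‖G x‖ ^ 2 which tends to atTop
  have hEq : ∀ᶠ x in l, Q.mulVec ((‖G x‖)⁻¹ • G x) ⬝ᵥ ((‖G x‖)⁻¹ • G x)
      = (2 * c) * (x / ‖G x‖ ^ (2:ℝ)) := by
    filter_upwards [hxpos, hGpos] with x hx hGx
    have hq : Q.mulVec (G x) ⬝ᵥ (G x) = 2 * (c * x) := by
      have := hlin x hx; linarith
    have hsmul : Q.mulVec ((‖G x‖)⁻¹ • G x) = (‖G x‖)⁻¹ • Q.mulVec (G x) := by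
      rw [Matrix.mulVec_smul]
    rw [hsmul, smul_dotProduct, dotProduct_smul, hq]
    rw [Real.rpow_two]
    field_simp
    have hone : ‖G x‖ ^ 2 * ‖G x‖⁻¹ ^ 2 = 1 := by
      rw [← mul_pow, mul_inv_cancel₀ hGx.ne', one_pow]
    linear_combination (c * x * 2) * hone
  have hAtTop : Tendsto (fun x => Q.mulVec ((‖G x‖)⁻¹ • G x) ⬝ᵥ ((‖G x‖)⁻¹ • G x)) l atTop := by
    refine Tendsto.congr' (EventuallyEq.symm hEq) ?_
    exact h2.const_mul_atTop (by positivity)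
  exact not_tendsto_atTop_of_tendsto_nhds hcomp hAtTop
end
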